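/- arXiv:2412.05008 — 6 statements merged into one kernel-verified Lean document; each statement's English description precedes it below -/
import Mathlib

section
/- Let H be a complex Hilbert space and let P, Q be bounded operators on H with 0 ≤ Q ≤ P. Then for every scalar t ∈ (0,1) there exists an invertible bounded operator Y on H such that P − t·Q = Y* P Y. -/
open scoped ComplexOrder

noncomputable section

section Defs

variable {A H : Type*}
variable [NormedAddCommGroup H] [InnerProductSpace ℂ H]

/-- An operator on a complex inner ℂ product space is positive:
`0 ≤ ⟪x, T x⟫` for all `x`. -/
def IsPosOp (T : H →L[ℂ] H) : Prop := ∀ x : H, 0 ≤ (inner ℂ x (T x) : ℂ)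

variable [Ring A] [StarRing A] [Algebra ℂ A]

/-- Complete positivity of a linear map `Φ : A → B(H)`:
`∑_{i,j} ⟪h i, Φ(a i* a j) (h j)⟫ ≥ 0` for all finite families. -/
def IsCPMap (Φ : A →ₗ[ℂ] (H →L[ℂ] H)) : Prop :=
  ∀ (n : ℕ) (a : Fin n → A) (h : Fin n → H),
    0 ≤ ∑ i, ∑ j, (inner ℂ (h i) ((Φ (star (a i) * a j)) (h j)) : ℂ)

/-- `CP^{(P)}(A, B(H))`: the CP maps `Φ` with `Φ 1 = P`. -/
def CPP (P : H →L[ℂ] H) : Set (A →ₗ[ℂ] (H →L[ℂ] H)) := {Φ | IsCPMap Φ ∧ Φ 1 = P}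

/-- `CCP(A, B(H))`: the contractive CP maps, i.e. CP maps with `Φ 1 ≤ 1`. -/
def CCPmaps : Set (A →ₗ[ℂ] (H →L[ℂ] H)) := {Φ | IsCPMap Φ ∧ IsPosOp (1 - Φ 1)}

variable [CompleteSpace H]

/-- `Ad_T : X ↦ T* X T`, as a linear map on `B(H)`. -/
def conjAd (T : H →L[ℂ] H) : (H →L[ℂ] H) →ₗ[ℂ] (H →L[ℂ] H) where
  toFun X := star T * X * T
  map_add' X Y := by simp [add_mul, mul_add]
  map_smul' c X := by simp [mul_smul_comm, smul_mul_assoc]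

/-- `Φ ∈ CP^{(P)}` is a `P`-`C*`-extreme point of `CP^{(P)}(A, B(H))`:
whenever `Φ = ∑ Ad_{T j} ∘ Φs j` is a proper `P`-`C*`-convex combination of members of
`CP^{(P)}`, each `Φs j` equals `Ad_{S j} ∘ Φ` for some invertible `S j`. -/
def IsPCExtreme (P : H →L[ℂ] H) (Φ : A →ₗ[ℂ] (H →L[ℂ] H)) : Prop :=
  Φ ∈ CPP (A := A) P ∧
  ∀ (n : ℕ) (T : Fin n → (H →L[ℂ] H)) (Φs : Fin n → (A →ₗ[ℂ] (H →L[ℂ] H))),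
    (∀ j, IsUnit (T j)) → (∀ j, Φs j ∈ CPP (A := A) P) →
    (∑ j, star (T j) * P * T j) = P →
    Φ = ∑ j, (conjAd (T j)).comp (Φs j) →
    ∀ j, ∃ S : H →L[ℂ] H, IsUnit S ∧ Φs j = (conjAd S).comp Φ

/-- `Φ ∈ C` is a `C*`-extreme point of the `C*`-convex set `C`:
whenever `Φ = ∑ Ad_{T j} ∘ Φs j` is a proper `C*`-convex combination of members of `C`,
each `Φs j` is unitarily equivalent to `Φ`. -/
def IsCstarExtreme (C : Set (A →ₗ[ℂ] (H →L[ℂ] H))) (Φ : A →ₗ[ℂ] (H →L[ℂ] H)) : Prop :=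
  Φ ∈ C ∧
  ∀ (n : ℕ) (T : Fin n → (H →L[ℂ] H)) (Φs : Fin n → (A →ₗ[ℂ] (H →L[ℂ] H))),
    (∀ j, IsUnit (T j)) → (∀ j, Φs j ∈ C) →
    (∑ j, star (T j) * T j) = 1 →
    Φ = ∑ j, (conjAd (T j)).comp (Φs j) →
    ∀ j, ∃ U : H →L[ℂ] H, U ∈ unitary (H →L[ℂ] H) ∧ Φs j = (conjAd U).comp Φ

/-- `Φ ∈ C` is a linear extreme point of the convex set `C`. -/
def IsLinExtreme (C : Set (A →ₗ[ℂ] (H →L[ℂ] H))) (Φ : A →ₗ[ℂ] (H →L[ℂ] H)) : Prop :=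
  Φ ∈ C ∧
  ∀ (n : ℕ) (t : Fin n → ℝ) (Φs : Fin n → (A →ₗ[ℂ] (H →L[ℂ] H))),
    (∀ j, 0 < t j ∧ t j < 1) → (∀ j, Φs j ∈ C) → (∑ j, t j) = 1 →
    Φ = ∑ j, (t j : ℂ) • Φs j →
    ∀ j, Φs j = Φ

end Defs

set_option synthInstance.maxHeartbeats 1000000
set_option maxHeartbeats 2000000

open ContinuousLinearMap in
theorem key {H : Type*} [NormedAddCommGroup H] [InnerProductSpace ℂ H] [CompleteSpace H]
    (P R : H →L[ℂ] H) (c : ℝ) (hc : 0 < c) (hc1 : c ≤ 1)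
    (hP : 0 ≤ P) (hR : 0 ≤ R)
    (h1 : ∀ x : H, (inner ℂ x (R x) : ℂ) ≤ inner ℂ x (P x))
    (h2 : ∀ x : H, (c : ℂ) * inner ℂ x (P x) ≤ inner ℂ x (R x)) :
    ∃ Z : H →L[ℂ] H, IsUnit Z ∧ Z * P * star Z = R := by
  set P' := CFC.sqrt P with hP'def
  set R' := CFC.sqrt R with hR'def
  have hP'sa : IsSelfAdjoint P' := IsSelfAdjoint.of_nonneg (CFC.sqrt_nonneg P)
  have hR'sa : IsSelfAdjoint R' := IsSelfAdjoint.of_nonneg (CFC.sqrt_nonneg R)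
  have hP'mul : P' * P' = P := CFC.sqrt_mul_sqrt_self P hP
  have hR'mul : R' * R' = R := CFC.sqrt_mul_sqrt_self R hR
  -- quadratic form identities
  have hsqid : ∀ (S : H →L[ℂ] H), IsSelfAdjoint S → ∀ x : H,
      (inner ℂ x ((S * S) x) : ℂ) = ((‖S x‖^2 : ℝ) : ℂ) := by
    intro S hS x
    rw [ContinuousLinearMap.mul_apply, ← adjoint_inner_left, IsSelfAdjoint.adjoint_eq hS,
      inner_self_eq_norm_sq_to_K]
    norm_cast
  have hPid : ∀ x : H, (inner ℂ x (P x) : ℂ) = ((‖P' x‖^2 : ℝ) : ℂ) := by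
    intro x; rw [← hP'mul]; exact hsqid P' hP'sa x
  have hRid : ∀ x : H, (inner ℂ x (R x) : ℂ) = ((‖R' x‖^2 : ℝ) : ℂ) := by
    intro x; rw [← hR'mul]; exact hsqid R' hR'sa x
  -- real norm inequalities
  have hRP : ∀ x : H, ‖R' x‖^2 ≤ ‖P' x‖^2 := by
    intro x
    have := h1 x
    rw [hPid x, hRid x] at this
    exact_mod_cast this
  have hPR : ∀ x : H, c * ‖P' x‖^2 ≤ ‖R' x‖^2 := by
    intro x
    have := h2 x
    rw [hPid x, hRid x] at this
    exact_mod_cast this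

  -- orthogonal of range = kernel for selfadjoint operators
  have horth : ∀ (S : H →L[ℂ] H), IsSelfAdjoint S →
      (LinearMap.range (S : H →ₗ[ℂ] H))ᗮ = LinearMap.ker (S : H →ₗ[ℂ] H) := by
    intro S hS
    ext v
    simp only [Submodule.mem_orthogonal, LinearMap.mem_range, LinearMap.mem_ker,
      forall_exists_index]
    constructor
    · intro h
      have hv : ∀ x : H, (inner ℂ x (S v) : ℂ) = 0 := by
        intro x
        have := h (S x) x rfl
        rwa [← hS.adjoint_eq, adjoint_inner_left] at this
      have := hv (S v)
      rwa [inner_self_eq_zero] at this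
    · intro h u x hx
      simp only [ContinuousLinearMap.coe_coe] at h hx
      rw [← hx, ← hS.adjoint_eq, adjoint_inner_left, h, inner_zero_right]
  -- equal kernels
  have hker : ∀ v : H, P' v = 0 ↔ R' v = 0 := by
    intro v
    constructor
    · intro h
      have h' : ‖R' v‖ ^ 2 ≤ 0 := by simpa [h] using hRP v
      exact norm_eq_zero.mp (by nlinarith [norm_nonneg (R' v)])
    · intro h
      have h' : c * ‖P' v‖ ^ 2 ≤ c * 0 := by simpa [h] using hPR v
      have h'' := le_of_mul_le_mul_left h' hc
      exact norm_eq_zero.mp (by nlinarith [norm_nonneg (P' v)])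
  set D : Submodule ℂ H := LinearMap.range (P' : H →ₗ[ℂ] H) with hDdef
  set K : Submodule ℂ H := D.topologicalClosure with hKdef
  haveI : CompleteSpace K := by
    rw [hKdef]
    exact D.isClosed_topologicalClosure.completeSpace_coe
  have hKR : (LinearMap.range (R' : H →ₗ[ℂ] H)).topologicalClosure = K := by
    have e1 : (LinearMap.range (R' : H →ₗ[ℂ] H))ᗮ = Dᗮ := by
      rw [horth R' hR'sa, hDdef, horth P' hP'sa]
      ext v
      simp only [LinearMap.mem_ker]
      exact (hker v).symm
    rw [← Submodule.orthogonal_orthogonal_eq_closure, e1, hKdef,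
      Submodule.orthogonal_orthogonal_eq_closure]
  have hR'memK : ∀ y : H, R' y ∈ K := fun y => by
    rw [← hKR]
    exact Submodule.le_topologicalClosure _ (LinearMap.mem_range_self (R' : H →ₗ[ℂ] H) y)
  have hP'memK : ∀ y : H, P' y ∈ K :=
    fun y => Submodule.le_topologicalClosure _ (LinearMap.mem_range_self (P' : H →ₗ[ℂ] H) y)
  -- well-definedness
  have hwd : ∀ a b : H, P' a = P' b → R' a = R' b := by
    intro a b hab
    have h' : ‖R' (a - b)‖ ^ 2 ≤ ‖P' (a - b)‖ ^ 2 := hRP _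
    rw [map_sub, map_sub, hab, sub_self] at h'
    simp only [norm_zero] at h'
    have : ‖R' a - R' b‖ = 0 := by nlinarith [norm_nonneg (R' a - R' b)]
    rw [← sub_eq_zero]
    exact norm_eq_zero.mp this
  -- the section
  have hsec0 : ∀ u : D, ∃ y : H, P' y = (u : H) := fun u => u.2
  choose sec hsec using hsec0
  -- the densely defined operator
  set g0 : D →ₗ[ℂ] H :=
    { toFun := fun u => R' (sec u)
      map_add' := by
        intro u v
        show R' (sec (u + v)) = R' (sec u) + R' (sec v)
        rw [← map_add]
        apply hwd
        rw [hsec, map_add, hsec, hsec, Submodule.coe_add]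
      map_smul' := by
        intro a u
        show R' (sec (a • u)) = a • R' (sec u)
        rw [← map_smul]
        apply hwd
        rw [hsec, map_smul, hsec, Submodule.coe_smul] } with hg0def
  have hg0norm : ∀ u : D, ‖g0 u‖ ≤ 1 * ‖u‖ := by
    intro u
    have h' : ‖R' (sec u)‖ ^ 2 ≤ ‖P' (sec u)‖ ^ 2 := hRP _
    rw [hsec] at h'
    have : ‖g0 u‖ = ‖R' (sec u)‖ := rfl
    rw [this, one_mul]
    have h2 : ‖(u : H)‖ = ‖u‖ := rfl
    nlinarith [norm_nonneg (R' (sec u)), norm_nonneg (u : H)]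
  set g : D →L[ℂ] H := g0.mkContinuous 1 hg0norm with hgdef
  -- inclusion D → K
  set e0 : D →ₗ[ℂ] K := Submodule.inclusion (Submodule.le_topologicalClosure D) with he0def
  have he0norm : ∀ u : D, ‖e0 u‖ = ‖u‖ := fun u => rfl
  set e : D →L[ℂ] K := e0.mkContinuous 1 (fun u => by rw [he0norm, one_mul]) with hedef
  have he_iso : Isometry e :=
    AddMonoidHomClass.isometry_of_norm e (fun u => he0norm u)
  have he_ui : IsUniformInducing e := he_iso.isUniformInducing
  have he_dense : DenseRange e := by
    intro u
    rw [Metric.mem_closure_iff]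
    intro eps heps
    have hu : (u : H) ∈ closure (D : Set H) := u.2
    rw [Metric.mem_closure_iff] at hu
    obtain ⟨y, hyD, hy⟩ := hu eps heps
    exact ⟨e ⟨y, hyD⟩, ⟨⟨y, hyD⟩, rfl⟩, by rw [Subtype.dist_eq]; exact hy⟩
  set C0 : K →L[ℂ] H := g.extend e with hC0def
  have hC0e : ∀ u : D, C0 (e u) = R' (sec u) := by
    intro u
    rw [hC0def, ContinuousLinearMap.extend_eq (h_dense := he_dense) (h_e := he_ui)]
    rfl
  set C : H →L[ℂ] H := C0.comp (K.orthogonalProjectionOnto) with hCdef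

  have hprojP' : ∀ x : H, ((K.orthogonalProjectionOnto (P' x)) : H) = P' x :=
    fun x => Submodule.starProjection_eq_self_iff.mpr (hP'memK x)
  have hCP' : ∀ x : H, C (P' x) = R' x := by
    intro x
    have h0 : C (P' x) = C0 (K.orthogonalProjectionOnto (P' x)) := rfl
    have h0' : K.orthogonalProjectionOnto (P' x) = e ⟨P' x, LinearMap.mem_range_self (P' : H →ₗ[ℂ] H) x⟩ :=
      Subtype.ext (hprojP' x)
    rw [h0, h0', hC0e]
    apply hwd
    rw [hsec]
  have hKcl : IsClosed (K : Set H) := by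
    rw [hKdef]; exact D.isClosed_topologicalClosure
  have hC0memK : ∀ u : K, C0 u ∈ K := by
    intro u
    refine he_dense.induction_on u (hKcl.preimage C0.continuous) ?_
    intro d
    show C0 (e d) ∈ K
    rw [hC0e]
    exact hR'memK _
  have hCKbot : ∀ v : H, v ∈ Kᗮ → C v = 0 := by
    intro v hv
    show C0 (K.orthogonalProjectionOnto v) = 0
    rw [Submodule.orthogonalProjectionOnto_apply_of_mem_orthogonal hv, map_zero]
  have hDK : D ≤ K := by rw [hKdef]; exact Submodule.le_topologicalClosure D
  have hP'bot : ∀ v : H, v ∈ Kᗮ → P' v = 0 := by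
    intro v hv
    have hv' : v ∈ Dᗮ := Submodule.orthogonal_le hDK hv
    rw [hDdef, horth P' hP'sa] at hv'
    exact hv'
  have hpyth : ∀ (a b : H), a ∈ K → b ∈ Kᗮ → ‖a + b‖^2 = ‖a‖^2 + ‖b‖^2 := by
    intro a b ha hb
    have h' := norm_add_sq_eq_norm_sq_add_norm_sq_of_inner_eq_zero a b
      (Submodule.inner_right_of_mem_orthogonal ha hb)
    simpa [pow_two] using h'
  set E : H →L[ℂ] H := K.subtypeL.comp (K.orthogonalProjectionOnto) with hEdef
  have hEapply : ∀ z : H, E z = ((K.orthogonalProjectionOnto z : K) : H) := fun z => rfl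
  set Z : H →L[ℂ] H := C + (1 - E) with hZdef
  have hZapply : ∀ z : H, Z z = C z + (z - E z) := by
    intro z
    rw [hZdef]
    simp only [ContinuousLinearMap.add_apply, ContinuousLinearMap.sub_apply,
      ContinuousLinearMap.one_apply]
  -- lower bound for C0 on K
  have hC0low : ∀ u : K, c * ‖(u : H)‖^2 ≤ ‖C0 u‖^2 := by
    have hcl : IsClosed {u : K | c * ‖(u : H)‖^2 ≤ ‖C0 u‖^2} := by
      apply isClosed_le
      · exact continuous_const.mul ((continuous_subtype_val.norm).pow 2)
      · exact (C0.continuous.norm.pow 2)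
    intro u
    refine he_dense.induction_on u hcl ?_
    intro d
    show c * ‖((e d : K) : H)‖^2 ≤ ‖C0 (e d)‖^2
    have h2' : ((e d : K) : H) = (d : H) := rfl
    rw [hC0e d, h2', ← hsec d]
    exact hPR _
  have hZlow : ∀ z : H, c * ‖z‖^2 ≤ ‖Z z‖^2 := by
    intro z
    have hz1 : C z = C0 (K.orthogonalProjectionOnto z) := rfl
    have hz2 : z - ((K.orthogonalProjectionOnto z : K) : H) ∈ Kᗮ :=
      K.sub_starProjection_mem_orthogonal z
    have hZz : Z z = C0 (K.orthogonalProjectionOnto z) + (z - ((K.orthogonalProjectionOnto z : K) : H)) := by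
      rw [hZapply z, hz1, hEapply]
    have hnorm : ‖Z z‖^2 = ‖C0 (K.orthogonalProjectionOnto z)‖^2
        + ‖z - ((K.orthogonalProjectionOnto z : K) : H)‖^2 := by
      rw [hZz]
      exact hpyth _ _ (hC0memK _) hz2
    have hznorm : ‖z‖^2 = ‖((K.orthogonalProjectionOnto z : K) : H)‖^2
        + ‖z - ((K.orthogonalProjectionOnto z : K) : H)‖^2 := by
      have hsplit : z = ((K.orthogonalProjectionOnto z : K) : H)
          + (z - ((K.orthogonalProjectionOnto z : K) : H)) := by abel
      nth_rewrite 1 [hsplit]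
      exact hpyth _ _ (K.orthogonalProjectionOnto z).2 hz2
    have h3' := hC0low (K.orthogonalProjectionOnto z)
    nlinarith [sq_nonneg ‖z - ((K.orthogonalProjectionOnto z : K) : H)‖]
  have hZanti : ∃ cK : NNReal, AntilipschitzWith cK Z := by
    have hsq : 0 < Real.sqrt c := Real.sqrt_pos.mpr hc
    refine ⟨⟨(Real.sqrt c)⁻¹, by positivity⟩, Z.antilipschitz_of_bound ?_⟩
    intro z
    have h3' := hZlow z
    have h4' : Real.sqrt c * ‖z‖ ≤ ‖Z z‖ := by
      nlinarith [Real.sq_sqrt hc.le, Real.sqrt_nonneg c, norm_nonneg (Z z), norm_nonneg z]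
    show ‖z‖ ≤ (Real.sqrt c)⁻¹ * ‖Z z‖
    rw [inv_mul_eq_div, le_div_iff₀ hsq]
    linarith [h4']
  -- dense range of Z
  have hbot : (LinearMap.range (Z : H →ₗ[ℂ] H))ᗮ = ⊥ := by
    rw [Submodule.eq_bot_iff]
    intro w hw
    rw [Submodule.mem_orthogonal] at hw
    have hvK : w - E w ∈ Kᗮ := by
      rw [hEapply]
      exact K.sub_starProjection_mem_orthogonal w
    have hZv : Z (w - E w) = w - E w := by
      rw [hZapply]
      have h0 : C (w - E w) = 0 := hCKbot _ hvK
      have h1' : E (w - E w) = 0 := by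
        rw [hEapply, Submodule.orthogonalProjectionOnto_apply_of_mem_orthogonal hvK]
        rfl
      rw [h0, h1', zero_add, sub_zero]
    have hv0 : w - E w = 0 := by
      have h4 := hw (Z (w - E w)) (LinearMap.mem_range_self _ _)
      rw [hZv] at h4
      have h5 : (inner ℂ (w - E w) (E w) : ℂ) = 0 := by
        apply Submodule.inner_left_of_mem_orthogonal _ hvK
        rw [hEapply]
        exact (K.orthogonalProjectionOnto w).2
      have h6 : (inner ℂ (w - E w) (w - E w) : ℂ)
          = inner ℂ (w - E w) w - inner ℂ (w - E w) (E w) := inner_sub_right _ _ _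
      rw [h4, h5, sub_zero] at h6
      rwa [inner_self_eq_zero] at h6
    have hwK : w ∈ K := by
      have : w = E w := by rwa [sub_eq_zero] at hv0
      rw [this, hEapply]
      exact (K.orthogonalProjectionOnto w).2
    have hRw : ∀ x : H, (inner ℂ x (R' w) : ℂ) = 0 := by
      intro x
      have h5 : Z (P' x) = R' x := by
        have hEP : E (P' x) = P' x := by rw [hEapply, hprojP' x]
        rw [hZapply, hCP', hEP, sub_self, add_zero]
      have h4 := hw (Z (P' x)) (LinearMap.mem_range_self _ _)
      rw [h5, ← hR'sa.adjoint_eq, ContinuousLinearMap.adjoint_inner_left] at h4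
      exact h4
    have hR'w : R' w = 0 := by
      have := hRw (R' w)
      rwa [inner_self_eq_zero] at this
    have hP'w : P' w = 0 := (hker w).mpr hR'w
    have hDw : ∀ z ∈ (D : Set H), (inner ℂ z w : ℂ) = 0 := by
      rintro z ⟨x, rfl⟩
      rw [ContinuousLinearMap.coe_coe, ← hP'sa.adjoint_eq, ContinuousLinearMap.adjoint_inner_left, hP'w, inner_zero_right]
    have hclset : closure (D : Set H) ⊆ {z : H | (inner ℂ z w : ℂ) = 0} :=
      closure_minimal hDw (isClosed_eq (Continuous.inner continuous_id continuous_const)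
        continuous_const)
    have hww : (inner ℂ w w : ℂ) = 0 := by
      apply hclset
      have : w ∈ closure (D : Set H) := hwK
      exact this
    rwa [inner_self_eq_zero] at hww
  have hZdense : (LinearMap.range (Z : H →ₗ[ℂ] H)).topologicalClosure = ⊤ :=
    Submodule.topologicalClosure_eq_top_iff.mpr hbot
  obtain ⟨cK, hanti⟩ := hZanti
  have hbij : Function.Bijective Z :=
    (Z.bijective_iff_dense_range_and_antilipschitz).mpr ⟨hZdense, cK, hanti⟩
  have hZunit : IsUnit Z := ContinuousLinearMap.isUnit_iff_bijective.mpr hbij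
  have hZP' : Z * P' = R' := by
    ext x
    show Z (P' x) = R' x
    have hEP : E (P' x) = P' x := by rw [hEapply, hprojP' x]
    rw [hZapply, hCP', hEP, sub_self, add_zero]
  refine ⟨Z, hZunit, ?_⟩
  calc Z * P * star Z = Z * (P' * P') * star Z := by rw [hP'mul]
    _ = (Z * P') * (star P' * star Z) := by rw [hP'sa.star_eq]; simp only [mul_assoc]
    _ = (Z * P') * star (Z * P') := by rw [star_mul]
    _ = R' * star R' := by rw [hZP']
    _ = R := by rw [hR'sa.star_eq, hR'mul]

open ContinuousLinearMap in
theorem posOp_nonneg' {H : Type*} [NormedAddCommGroup H] [InnerProductSpace ℂ H] [CompleteSpace H]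
    (T : H →L[ℂ] H) (h : ∀ x : H, 0 ≤ (inner ℂ x (T x) : ℂ)) : (0 : H →L[ℂ] H) ≤ T := by
  rw [ContinuousLinearMap.nonneg_iff_isPositive, ContinuousLinearMap.isPositive_iff_complex]
  intro x
  have h1 := h x
  rw [Complex.le_def] at h1
  obtain ⟨hre, him⟩ := h1
  simp only [Complex.zero_re, Complex.zero_im] at hre him
  have h2 : (inner ℂ (T x) x : ℂ) = starRingEnd ℂ (inner ℂ x (T x)) := by
    rw [inner_conj_symm]
  constructor
  · apply Complex.ext
    · simp
    · show (0:ℝ) = _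
      rw [h2, Complex.conj_im, ← him]
      simp
  · show (0:ℝ) ≤ _
    rw [h2, RCLike.conj_re]
    exact hre

theorem stmt0' {H : Type*} [NormedAddCommGroup H] [InnerProductSpace ℂ H] [CompleteSpace H]
    (P Q : H →L[ℂ] H) (hQ : ∀ x : H, 0 ≤ (inner ℂ x (Q x) : ℂ))
    (hQP : ∀ x : H, 0 ≤ (inner ℂ x ((P - Q) x) : ℂ))
    (t : ℝ) (ht : t ∈ Set.Ioo (0 : ℝ) 1) :
    ∃ Y : H →L[ℂ] H, IsUnit Y ∧ P - (t : ℂ) • Q = star Y * P * Y := by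
  obtain ⟨ht0, ht1⟩ := ht
  set R : H →L[ℂ] H := P - (t:ℂ) • Q with hRdef
  have hinner : ∀ x : H, (inner ℂ x (R x) : ℂ) = inner ℂ x (P x) - (t:ℂ) * inner ℂ x (Q x) := by
    intro x
    rw [hRdef]
    simp only [ContinuousLinearMap.sub_apply, ContinuousLinearMap.smul_apply, inner_sub_right]
    rw [inner_smul_right]
  have hPQ : ∀ x : H, (0:ℂ) ≤ inner ℂ x (P x) - inner ℂ x (Q x) := by
    intro x
    have h' := hQP x
    simpa [ContinuousLinearMap.sub_apply, inner_sub_right] using h'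
  have htC : (0:ℂ) ≤ (t:ℂ) := by
    rw [Complex.le_def]
    simp [ht0.le]
  have htC1 : (0:ℂ) ≤ ((1-t:ℝ):ℂ) := by
    rw [Complex.le_def]
    simp
    linarith
  have hP : (0 : H →L[ℂ] H) ≤ P := posOp_nonneg' P (by
    intro x
    have h1 := hQ x
    have h2 := hPQ x
    calc (0:ℂ) ≤ (inner ℂ x (P x) - inner ℂ x (Q x)) + inner ℂ x (Q x) := add_nonneg h2 h1
      _ = inner ℂ x (P x) := by ring)
  have hR : (0 : H →L[ℂ] H) ≤ R := posOp_nonneg' R (by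
    intro x
    rw [hinner x]
    have h1 := hQ x
    have h2 := hPQ x
    have heq : (inner ℂ x (P x) : ℂ) - (t:ℂ) * inner ℂ x (Q x)
        = (inner ℂ x (P x) - inner ℂ x (Q x)) + ((1-t:ℝ):ℂ) * inner ℂ x (Q x) := by
      push_cast; ring
    rw [heq]
    exact add_nonneg h2 (mul_nonneg htC1 h1))
  have h1' : ∀ x : H, (inner ℂ x (R x):ℂ) ≤ inner ℂ x (P x) := by
    intro x
    rw [hinner x, ← sub_nonneg]
    have heq : (inner ℂ x (P x) : ℂ) - (inner ℂ x (P x) - (t:ℂ) * inner ℂ x (Q x))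
        = (t:ℂ) * inner ℂ x (Q x) := by ring
    rw [heq]
    exact mul_nonneg htC (hQ x)
  have h2' : ∀ x : H, ((1-t:ℝ):ℂ) * inner ℂ x (P x) ≤ inner ℂ x (R x) := by
    intro x
    rw [hinner x, ← sub_nonneg]
    have heq : ((inner ℂ x (P x) : ℂ) - (t:ℂ) * inner ℂ x (Q x)) - ((1-t:ℝ):ℂ) * inner ℂ x (P x)
        = (t:ℂ) * (inner ℂ x (P x) - inner ℂ x (Q x)) := by push_cast; ring
    rw [heq]
    exact mul_nonneg htC (hPQ x)
  obtain ⟨Z, hZu, hZeq⟩ := key P R (1 - t) (by linarith) (by linarith) hP hR h1' h2'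
  refine ⟨star Z, hZu.star, ?_⟩
  rw [star_star, hZeq]

/-- Lemma 2.1 / `lem-Douglas-cor`. If `0 ≤ Q ≤ P` in `B(H)`, then for every
`t ∈ (0,1)` there is an invertible `Y ∈ B(H)` with `P - t Q = Y* P Y`. -/
theorem stmt0 {H : Type*} [NormedAddCommGroup H] [InnerProductSpace ℂ H] [CompleteSpace H]
    (P Q : H →L[ℂ] H) (hQ : IsPosOp Q) (hQP : IsPosOp (P - Q))
    (t : ℝ) (ht : t ∈ Set.Ioo (0 : ℝ) 1) :
    ∃ Y : H →L[ℂ] H, IsUnit Y ∧ P - (t : ℂ) • Q = star Y * P * Y := by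
  exact stmt0' P Q hQ hQP t ht

end
end

section
/- Let T ∈ B(H) be invertible and P ∈ B(H) be positive such that T* P T ≤ β·P for some scalar β > 0. Then the following are equivalent: (i) there exists a scalar α > 0 with α·P ≤ T* P T; (ii) the range of T* P^{1/2} equals the range of P^{1/2}; (iii) T* P^{1/2} = P^{1/2} Y for some invertible Y ∈ B(H). -/
open scoped ComplexOrder

noncomputable section

local notation "⟪" x ", " y "⟫" => (inner ℂ x y : ℂ)

section DouglasHelpers

variable {H : Type*} [NormedAddCommGroup H] [InnerProductSpace ℂ H] [CompleteSpace H]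

open ContinuousLinearMap in
/-- Majorization implies range inclusion of adjoints (Douglas). -/
lemma aux_maj_range (A B : H →L[ℂ] H) (c : ℝ)
    (h : ∀ x, ‖A x‖ ≤ c * ‖B x‖) (u : H) :
    ∃ z, ContinuousLinearMap.adjoint B z = ContinuousLinearMap.adjoint A u := by
  have hw : ∀ x y : H, B x = B y → A x = A y := by
    intro x y hxy
    have h1 : B (x - y) = 0 := by rw [map_sub, hxy, sub_self]
    have h2 := h (x - y)
    rw [h1, norm_zero, mul_zero] at h2
    have h3 : A (x - y) = 0 := norm_le_zero_iff.mp h2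
    rw [map_sub, sub_eq_zero] at h3
    exact h3
  set p : Submodule ℂ H := LinearMap.range (B : H →ₗ[ℂ] H) with hp
  have hsel : ∀ w : p, ∃ x, B x = (w : H) := fun w => LinearMap.mem_range.mp w.2
  choose sel hsel' using hsel
  have hselval : ∀ (w : p) (x : H), B x = (w : H) → A (sel w) = A x := by
    intro w x hx
    exact hw _ _ (by rw [hsel' w, hx])
  let φ : p →ₗ[ℂ] ℂ :=
    { toFun := fun w => ⟪u, A (sel w)⟫
      map_add' := by
        intro w w'
        have : A (sel (w + w')) = A (sel w) + A (sel w') := by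
          rw [hselval (w + w') (sel w + sel w') (by rw [map_add, hsel', hsel']; rfl), map_add]
        simp [this, inner_add_right]
      map_smul' := by
        intro m w
        have : A (sel (m • w)) = m • A (sel w) := by
          rw [hselval (m • w) (m • sel w) (by rw [map_smul, hsel']; rfl), map_smul]
        simp [this, inner_smul_right] }
  have hφbound : ∀ w : p, ‖φ w‖ ≤ (‖u‖ * max c 0) * ‖w‖ := by
    intro w
    have h1 : ‖φ w‖ ≤ ‖u‖ * ‖A (sel w)‖ := norm_inner_le_norm _ _
    have h2 : ‖A (sel w)‖ ≤ max c 0 * ‖B (sel w)‖ := by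
      refine (h (sel w)).trans ?_
      exact mul_le_mul_of_nonneg_right (le_max_left _ _) (norm_nonneg _)
    have h3 : ‖B (sel w)‖ = ‖w‖ := by rw [hsel' w]; rfl
    rw [h3] at h2
    calc ‖φ w‖ ≤ ‖u‖ * ‖A (sel w)‖ := h1
      _ ≤ ‖u‖ * (max c 0 * ‖w‖) :=
        mul_le_mul_of_nonneg_left h2 (norm_nonneg _)
      _ = (‖u‖ * max c 0) * ‖w‖ := by ring
  let φc : p →L[ℂ] ℂ := φ.mkContinuous _ hφbound
  obtain ⟨ψ, hψ, -⟩ := exists_extension_norm_eq p φc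
  refine ⟨(InnerProductSpace.toDual ℂ H).symm ψ, ?_⟩
  apply ext_inner_right ℂ
  intro x
  rw [ContinuousLinearMap.adjoint_inner_left, ContinuousLinearMap.adjoint_inner_left,
    InnerProductSpace.toDual_symm_apply]
  have hmem : B x ∈ p := LinearMap.mem_range_self (B : H →ₗ[ℂ] H) x
  have := hψ ⟨B x, hmem⟩
  rw [this]
  show ⟪u, A (sel ⟨B x, hmem⟩)⟫ = ⟪u, A x⟫
  rw [hselval ⟨B x, hmem⟩ x rfl]

open ContinuousLinearMap Filter Topology in
/-- Range inclusion implies bounded factorization (Douglas, via closed graph thm). -/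
lemma aux_range_factor (A B : H →L[ℂ] H)
    (h : ∀ x, ∃ y, B y = A x) :
    ∃ C : H →L[ℂ] H, (∀ x, B (C x) = A x) ∧ ∀ x, C x ∈ (LinearMap.ker (B : H →ₗ[ℂ] H))ᗮ := by
  set N : Submodule ℂ H := LinearMap.ker (B : H →ₗ[ℂ] H) with hN
  haveI : CompleteSpace N := (ContinuousLinearMap.isClosed_ker B).completeSpace_coe
  have hzero : ∀ v : H, v ∈ N → v ∈ Nᗮ → v = 0 := by
    intro v hv hv'
    have : ⟪v, v⟫ = 0 := Submodule.inner_right_of_mem_orthogonal hv hv'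
    exact inner_self_eq_zero.mp this
  have hex : ∀ x, ∃ y, y ∈ Nᗮ ∧ B y = A x := by
    intro x
    obtain ⟨y₀, hy₀⟩ := h x
    refine ⟨y₀ - (N.orthogonalProjectionOnto y₀ : H),
      Submodule.sub_starProjection_mem_orthogonal y₀, ?_⟩
    have hk : B ((N.orthogonalProjectionOnto y₀ : H)) = 0 := (N.orthogonalProjectionOnto y₀).2
    rw [map_sub, hk, sub_zero, hy₀]
  have huniq : ∀ y y' : H, y ∈ Nᗮ → y' ∈ Nᗮ → B y = B y' → y = y' := by
    intro y y' hy hy' hB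
    have h1 : y - y' ∈ N := by
      rw [hN, LinearMap.mem_ker, ContinuousLinearMap.coe_coe, map_sub, hB, sub_self]
    have h2 : y - y' ∈ Nᗮ := Submodule.sub_mem _ hy hy'
    have := hzero _ h1 h2
    rwa [sub_eq_zero] at this
  choose C0 hC0mem hC0eq using hex
  let Clin : H →ₗ[ℂ] H :=
    { toFun := C0
      map_add' := by
        intro x x'
        refine huniq _ _ (hC0mem _) (Submodule.add_mem _ (hC0mem x) (hC0mem x')) ?_
        rw [hC0eq, map_add, map_add, hC0eq, hC0eq]
      map_smul' := by
        intro m x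
        refine huniq _ _ (hC0mem _) (Submodule.smul_mem _ m (hC0mem x)) ?_
        rw [hC0eq, map_smul, RingHom.id_apply, map_smul, hC0eq] }
  have hcont : Continuous Clin := by
    apply Clin.continuous_of_seq_closed_graph
    intro u x y hux huy
    have hymem : y ∈ Nᗮ := by
      refine (Submodule.isClosed_orthogonal N).mem_of_tendsto huy ?_
      exact Filter.Eventually.of_forall fun n => hC0mem (u n)
    have hBy : B y = A x := by
      have t1 : Tendsto (fun n => B (Clin (u n))) atTop (𝓝 (B y)) :=
        (B.continuous.tendsto y).comp huy
      have t2 : Tendsto (fun n => B (Clin (u n))) atTop (𝓝 (A x)) := by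
        have : (fun n => B (Clin (u n))) = fun n => A (u n) := by
          funext n; exact hC0eq (u n)
        rw [this]
        exact (A.continuous.tendsto x).comp hux
      exact tendsto_nhds_unique t1 t2
    exact huniq _ _ hymem (hC0mem x) (by rw [hBy]; exact (hC0eq x).symm)
  exact ⟨⟨Clin, hcont⟩, fun x => hC0eq x, fun x => hC0mem x⟩

end DouglasHelpers

/-- Lemma `lem-invertible-conjugate-positive-inequality`. For `T` invertible and
`P ≥ 0` with `T* P T ≤ β P` for some `β > 0`, the following are equivalent:
(i) `α P ≤ T* P T` for some `α > 0`; (ii) `ran(T* P^0.5) = ran(P^0.5)`;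
(iii) `T* P^0.5 = P^0.5 Y` for some invertible `Y`.  Here `R` denotes the positive
square root `P^0.5` of `P`. -/
theorem stmt1 {H : Type*} [NormedAddCommGroup H] [InnerProductSpace ℂ H] [CompleteSpace H]
    (P R T : H →L[ℂ] H) (hP : IsPosOp P) (hR : IsPosOp R) (hRR : R * R = P)
    (hT : IsUnit T) (β : ℝ) (hβ : 0 < β)
    (hdom : IsPosOp ((β : ℂ) • P - star T * P * T)) :
    ((∃ α : ℝ, 0 < α ∧ IsPosOp (star T * P * T - (α : ℂ) • P)) ↔
        Set.range ⇑(star T * R) = Set.range ⇑R) ∧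
    ((Set.range ⇑(star T * R) = Set.range ⇑R) ↔
        ∃ Y : H →L[ℂ] H, IsUnit Y ∧ star T * R = R * Y) := by
  classical
  -- R is symmetric / self-adjoint
  have hRsymm : (R : H →ₗ[ℂ] H).IsSymmetric := by
    rw [LinearMap.isSymmetric_iff_inner_map_self_real]
    intro v
    have h0 := hR v
    have him : (⟪v, R v⟫).im = 0 := ((Complex.le_def.mp h0).2).symm
    have e1 : (inner ℂ (R v) v : ℂ) = (starRingEnd ℂ) ⟪v, R v⟫ := (inner_conj_symm _ _).symm
    show (starRingEnd ℂ) (inner ℂ (R v) v : ℂ) = (inner ℂ (R v) v : ℂ)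
    rw [Complex.conj_eq_iff_im, e1, Complex.conj_im, him, neg_zero]
  have hRsa : IsSelfAdjoint R := ContinuousLinearMap.isSelfAdjoint_iff_isSymmetric.mpr hRsymm
  have hRadj : ContinuousLinearMap.adjoint R = R := by
    rw [← ContinuousLinearMap.star_eq_adjoint]; exact hRsa.star_eq
  have hPin : ∀ x : H, ⟪x, P x⟫ = ((‖R x‖ ^ 2 : ℝ) : ℂ) := by
    intro x
    rw [← hRR]
    have e1 : (R * R) x = R (R x) := rfl
    rw [e1, show (inner ℂ x (R (R x)) : ℂ) = inner ℂ (R x) (R x) from (hRsymm x (R x)).symm,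
      inner_self_eq_norm_sq_to_K]
    norm_cast
  have hTPT : ∀ x : H, ⟪x, (star T * P * T) x⟫ = ((‖R (T x)‖ ^ 2 : ℝ) : ℂ) := by
    intro x
    have e1 : (star T * P * T) x = (ContinuousLinearMap.adjoint T) (P (T x)) := by
      rw [ContinuousLinearMap.star_eq_adjoint]; rfl
    rw [e1, ContinuousLinearMap.adjoint_inner_right, hPin (T x)]
  have hβn : ∀ x, ‖R (T x)‖ ^ 2 ≤ β * ‖R x‖ ^ 2 := by
    intro x
    have h0 := hdom x
    have e : ⟪x, (((β : ℂ) • P - star T * P * T)) x⟫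
        = ((β * ‖R x‖ ^ 2 - ‖R (T x)‖ ^ 2 : ℝ) : ℂ) := by
      rw [ContinuousLinearMap.sub_apply, inner_sub_right, ContinuousLinearMap.smul_apply,
        inner_smul_right, hPin, hTPT]
      push_cast; ring
    rw [e, Complex.zero_le_real] at h0
    linarith
  have hiα : ∀ α : ℝ, IsPosOp (star T * P * T - (α : ℂ) • P) ↔
      ∀ x, α * ‖R x‖ ^ 2 ≤ ‖R (T x)‖ ^ 2 := by
    intro α
    have e : ∀ x : H, ⟪x, ((star T * P * T - (α : ℂ) • P)) x⟫
        = ((‖R (T x)‖ ^ 2 - α * ‖R x‖ ^ 2 : ℝ) : ℂ) := by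
      intro x
      rw [ContinuousLinearMap.sub_apply, inner_sub_right, ContinuousLinearMap.smul_apply,
        inner_smul_right, hPin, hTPT]
      push_cast; ring
    constructor
    · intro h x
      have := h x
      rw [e, Complex.zero_le_real] at this
      linarith
    · intro h x
      rw [e, Complex.zero_le_real]
      linarith [h x]
  set S := star T * R with hS
  have hRTapp : ∀ x, (R * T) x = R (T x) := fun _ => rfl
  have hRTadj : ContinuousLinearMap.adjoint (R * T) = S := by
    rw [← ContinuousLinearMap.star_eq_adjoint, star_mul, hRsa.star_eq, hS]
  have hTstarinj : Function.Injective ⇑(star T) :=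
    (ContinuousLinearMap.isUnit_iff_bijective.mp hT.star).1
  -- (i) → (ii)
  have d12 : (∃ α : ℝ, 0 < α ∧ IsPosOp (star T * P * T - (α : ℂ) • P)) →
      Set.range ⇑S = Set.range ⇑R := by
    rintro ⟨α, hα, hpos⟩
    have hαn := (hiα α).mp hpos
    apply Set.eq_of_subset_of_subset
    · rintro y ⟨u, rfl⟩
      have hmaj : ∀ x, ‖(R * T) x‖ ≤ Real.sqrt β * ‖R x‖ := by
        intro x
        rw [hRTapp]
        have h1 : ‖R (T x)‖ ^ 2 ≤ (Real.sqrt β * ‖R x‖) ^ 2 := by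
          rw [mul_pow, Real.sq_sqrt hβ.le]; exact hβn x
        have := Real.sqrt_le_sqrt h1
        rwa [Real.sqrt_sq (norm_nonneg _), Real.sqrt_sq (by positivity)] at this
      obtain ⟨z, hz⟩ := aux_maj_range (R * T) R (Real.sqrt β) hmaj u
      rw [hRadj, hRTadj] at hz
      exact ⟨z, hz⟩
    · rintro y ⟨u, rfl⟩
      have hsα : 0 < Real.sqrt α := Real.sqrt_pos.mpr hα
      have hmaj : ∀ x, ‖R x‖ ≤ (Real.sqrt α)⁻¹ * ‖(R * T) x‖ := by
        intro x
        rw [hRTapp]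
        have h1 : (Real.sqrt α * ‖R x‖) ^ 2 ≤ ‖R (T x)‖ ^ 2 := by
          rw [mul_pow, Real.sq_sqrt hα.le]; exact hαn x
        have h2 : Real.sqrt α * ‖R x‖ ≤ ‖R (T x)‖ := by
          have := Real.sqrt_le_sqrt h1
          rwa [Real.sqrt_sq (by positivity), Real.sqrt_sq (norm_nonneg _)] at this
        rw [inv_mul_eq_div, le_div_iff₀ hsα]
        linarith
      obtain ⟨z, hz⟩ := aux_maj_range R (R * T) ((Real.sqrt α)⁻¹) hmaj u
      rw [hRadj, hRTadj] at hz
      exact ⟨z, hz⟩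
  -- (ii) → (iii)
  have d23 : Set.range ⇑S = Set.range ⇑R →
      ∃ Y : H →L[ℂ] H, IsUnit Y ∧ S = R * Y := by
    intro hrange
    obtain ⟨C, hCeq, hCmem⟩ := aux_range_factor S R (fun x => by
      have hx : S x ∈ Set.range ⇑R := by rw [← hrange]; exact Set.mem_range_self x
      exact hx)
    obtain ⟨D, hDeq, hDmem⟩ := aux_range_factor R S (fun x => by
      have hx : R x ∈ Set.range ⇑S := by rw [hrange]; exact Set.mem_range_self x
      exact hx)
    set N : Submodule ℂ H := LinearMap.ker (R : H →ₗ[ℂ] H) with hNdef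
    haveI : CompleteSpace N := (ContinuousLinearMap.isClosed_ker R).completeSpace_coe
    have hzero : ∀ v : H, v ∈ N → v ∈ Nᗮ → v = 0 := by
      intro v hv hv'
      exact inner_self_eq_zero.mp (Submodule.inner_right_of_mem_orthogonal hv hv')
    have hkerS : LinearMap.ker (S : H →ₗ[ℂ] H) = N := by
      ext x
      simp only [LinearMap.mem_ker, hNdef]
      constructor
      · intro hx
        apply hTstarinj
        rw [map_zero]
        exact hx
      · intro hx
        show (star T * R) x = 0
        rw [ContinuousLinearMap.mul_apply, show R x = 0 from hx, map_zero]
    have hDmem' : ∀ x, D x ∈ Nᗮ := fun x => hkerS ▸ hDmem x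
    have hSker : ∀ n, R n = 0 → S n = 0 := by
      intro n hn
      show (star T * R) n = 0
      rw [ContinuousLinearMap.mul_apply, hn, map_zero]
    have hCker : ∀ n, n ∈ N → C n = 0 := by
      intro n hn
      have h1 : R (C n) = 0 := by rw [hCeq n]; exact hSker n hn
      exact hzero _ h1 (hCmem n)
    set Y : H →L[ℂ] H := C + N.subtypeL.comp (N.orthogonalProjectionOnto) with hYdef
    have hYapp : ∀ x, Y x = C x + (N.orthogonalProjectionOnto x : H) := fun x => rfl
    have hRY : ∀ x, R (Y x) = S x := by
      intro x
      rw [hYapp, map_add, hCeq]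
      have h0 : R ((N.orthogonalProjectionOnto x : H)) = 0 := (N.orthogonalProjectionOnto x).2
      rw [h0, add_zero]
    have hCD : ∀ m, m ∈ Nᗮ → C (D m) = m := by
      intro m hm
      have h1 : R (C (D m)) = R m := by rw [hCeq, hDeq]
      have h2 : C (D m) - m ∈ N := by
        rw [hNdef]
        exact LinearMap.mem_ker.mpr (by rw [ContinuousLinearMap.coe_coe, map_sub, h1, sub_self])
      have h3 : C (D m) - m ∈ Nᗮ := Submodule.sub_mem _ (hCmem _) hm
      have h4 := hzero _ h2 h3
      rwa [sub_eq_zero] at h4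
    have hinj : Function.Injective ⇑Y := by
      intro a b hab
      suffices h : ∀ x, Y x = 0 → x = 0 by
        have h5 : Y (a - b) = 0 := by rw [map_sub, hab, sub_self]
        have := h _ h5
        rwa [sub_eq_zero] at this
      intro x hx
      set n : H := (N.orthogonalProjectionOnto x : H) with hn
      have hnN : n ∈ N := (N.orthogonalProjectionOnto x).2
      have hmN : x - n ∈ Nᗮ := Submodule.sub_starProjection_mem_orthogonal x
      have hCx : C x = C (x - n) := by rw [map_sub, hCker n hnN, sub_zero]
      have hx' : C (x - n) + n = 0 := by
        rw [← hCx]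
        rw [hYapp] at hx
        exact hx
      have hnz : n = 0 := by
        refine hzero n hnN ?_
        have h6 : n = -(C (x - n)) := eq_neg_of_add_eq_zero_right hx'
        rw [h6]
        exact Submodule.neg_mem _ (hCmem _)
      have hCm : C (x - n) = 0 := by
        have h9 : C (x - n) = -n := eq_neg_of_add_eq_zero_left hx'
        rw [h9, hnz, neg_zero]
      have hRm : R (x - n) = 0 := by
        have h1 : R (C (x - n)) = S (x - n) := hCeq _
        rw [hCm, map_zero] at h1
        apply hTstarinj
        rw [map_zero]
        exact h1.symm
      have hmz : x - n = 0 := hzero _ (LinearMap.mem_ker.mpr hRm) hmN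
      have h7 : x = n := by rwa [sub_eq_zero] at hmz
      rw [h7, hnz]
    have hsurj : Function.Surjective ⇑Y := by
      intro z
      set n : H := (N.orthogonalProjectionOnto z : H) with hn
      have hnN : n ∈ N := (N.orthogonalProjectionOnto z).2
      have hmN : z - n ∈ Nᗮ := Submodule.sub_starProjection_mem_orthogonal z
      refine ⟨n + D (z - n), ?_⟩
      have hp1 : ((N.orthogonalProjectionOnto n : H)) = n := Submodule.starProjection_eq_self_iff.mpr hnN
      have hp2 : (N.orthogonalProjectionOnto (D (z - n))) = 0 :=
        Submodule.orthogonalProjectionOnto_apply_of_mem_orthogonal (hDmem' _)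
      rw [hYapp, map_add, hCker n hnN, zero_add, hCD _ hmN, map_add, hp2]
      push_cast
      rw [hp1]
      abel
    refine ⟨Y, ContinuousLinearMap.isUnit_iff_bijective.mpr ⟨hinj, hsurj⟩, ?_⟩
    ext x
    exact (hRY x).symm
  -- (iii) → (ii)
  have d32 : (∃ Y : H →L[ℂ] H, IsUnit Y ∧ S = R * Y) →
      Set.range ⇑S = Set.range ⇑R := by
    rintro ⟨Y, hYu, hYeq⟩
    have hYsurj : Function.Surjective ⇑Y := (ContinuousLinearMap.isUnit_iff_bijective.mp hYu).2
    apply Set.eq_of_subset_of_subset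
    · rintro y ⟨u, rfl⟩
      exact ⟨Y u, by rw [hYeq]; rfl⟩
    · rintro y ⟨u, rfl⟩
      obtain ⟨v, hv⟩ := hYsurj u
      exact ⟨v, by rw [hYeq]; show R (Y v) = R u; rw [hv]⟩
  -- (iii) → (i)
  have d31 : (∃ Y : H →L[ℂ] H, IsUnit Y ∧ S = R * Y) →
      (∃ α : ℝ, 0 < α ∧ IsPosOp (star T * P * T - (α : ℂ) • P)) := by
    rintro ⟨Y, hYu, hYeq⟩
    obtain ⟨uY, huY⟩ := hYu
    set Z : H →L[ℂ] H := ↑uY⁻¹ with hZ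
    have hYZ : Y * Z = 1 := by rw [← huY, hZ]; exact_mod_cast uY.mul_inv
    have h1 : R * T = ContinuousLinearMap.adjoint Y * R := by
      have e1 : ContinuousLinearMap.adjoint S = R * T := by
        rw [← hRTadj, ContinuousLinearMap.adjoint_adjoint]
      have e2 : ContinuousLinearMap.adjoint S = ContinuousLinearMap.adjoint Y * R := by
        rw [hYeq, ← ContinuousLinearMap.star_eq_adjoint, star_mul, hRsa.star_eq,
          ContinuousLinearMap.star_eq_adjoint]
      exact e1.symm.trans e2
    have hZbound : ∀ x : H, ‖R x‖ ≤ ‖ContinuousLinearMap.adjoint Z‖ * ‖R (T x)‖ := by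
      intro x
      have e3 : R (T x) = ContinuousLinearMap.adjoint Y (R x) := by
        have := congrArg (fun f : H →L[ℂ] H => f x) h1
        exact this
      have hZY : ContinuousLinearMap.adjoint Z * ContinuousLinearMap.adjoint Y = 1 := by
        rw [← ContinuousLinearMap.star_eq_adjoint, ← ContinuousLinearMap.star_eq_adjoint,
          ← star_mul, hYZ, star_one]
      have e4 : ContinuousLinearMap.adjoint Z (R (T x)) = R x := by
        rw [e3, ← ContinuousLinearMap.mul_apply, hZY, ContinuousLinearMap.one_apply]
      calc ‖R x‖ = ‖ContinuousLinearMap.adjoint Z (R (T x))‖ := by rw [e4]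
        _ ≤ ‖ContinuousLinearMap.adjoint Z‖ * ‖R (T x)‖ := ContinuousLinearMap.le_opNorm _ _
    set c : ℝ := max ‖ContinuousLinearMap.adjoint Z‖ 1 with hc
    have hc1 : (1 : ℝ) ≤ c := le_max_right _ _
    refine ⟨(c ^ 2)⁻¹, by positivity, (hiα _).mpr ?_⟩
    intro x
    have h5 : ‖R x‖ ≤ c * ‖R (T x)‖ :=
      (hZbound x).trans (mul_le_mul_of_nonneg_right (le_max_left _ _) (norm_nonneg _))
    have h6 : ‖R x‖ ^ 2 ≤ c ^ 2 * ‖R (T x)‖ ^ 2 := by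
      nlinarith [norm_nonneg (R x), norm_nonneg (R (T x)), norm_nonneg (R x)]
    have hcpos : (0 : ℝ) < c ^ 2 := by positivity
    rw [inv_mul_le_iff₀ hcpos]
    linarith
  exact ⟨⟨d12, fun h => d31 (d23 h)⟩, d23, d32⟩


end
end

section
/- Let A be a unital C*-algebra, H a complex Hilbert space, and P ∈ B(H) positive such that either P is invertible or H is finite-dimensional. Then for Φ ∈ CP^{(P)}(A,B(H)) the following are equivalent: (i) Φ is a P-C*-extreme point of CP^{(P)}(A,B(H)); (ii) whenever Φ = Ad_{T_1}∘Φ_1 + Ad_{T_2}∘Φ_2 with Φ_1, Φ_2 ∈ CP^{(P)}(A,B(H)) and T_1, T_2 ∈ B(H) invertible satisfying T_1* P T_1 + T_2* P T_2 = P, there exist invertible S_1, S_2 ∈ B(H) with Φ_j = Ad_{S_j}∘Φ for j = 1, 2. -/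
open scoped ComplexOrder

noncomputable section

section Helpers

variable {H : Type*} [NormedAddCommGroup H] [InnerProductSpace ℂ H] [CompleteSpace H]

open ContinuousLinearMap in
lemma isPosOp_iff_nonneg (T : H →L[ℂ] H) : IsPosOp T ↔ 0 ≤ T := by
  rw [nonneg_iff_isPositive, isPositive_iff_complex]
  constructor
  · intro h x
    obtain ⟨hre, him⟩ := Complex.nonneg_iff.mp (h x)
    have hc : (starRingEnd ℂ) (inner ℂ x (T x) : ℂ) = (inner ℂ x (T x) : ℂ) :=
      Complex.conj_eq_iff_im.mpr him.symm
    have h1 : (inner ℂ (T x) x : ℂ) = inner ℂ x (T x) := by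
      rw [← inner_conj_symm]; exact hc
    constructor
    · rw [h1]
      simpa using (Complex.conj_eq_iff_re.mp hc)
    · rw [h1]; simpa using hre
  · intro h x
    obtain ⟨hre, hpos⟩ := h x
    have h1 : (inner ℂ x (T x) : ℂ) = inner ℂ (T x) x := by
      rw [← inner_conj_symm x (T x), ← hre]
      simp
    rw [Complex.nonneg_iff, h1, ← hre]
    simpa using hpos

@[simp] lemma conjAd_apply (T X : H →L[ℂ] H) : conjAd T X = star T * X * T := rfl

lemma conjAd_conjAd (S T X : H →L[ℂ] H) :
    conjAd T (conjAd S X) = conjAd (S * T) X := by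
  simp [conjAd_apply, star_mul, mul_assoc]

lemma inner_conjAd_apply (T X : H →L[ℂ] H) (x y : H) :
    (inner ℂ x ((star T * X * T) y) : ℂ) = inner ℂ (T x) (X (T y)) := by
  rw [ContinuousLinearMap.star_eq_adjoint]
  simp [ContinuousLinearMap.mul_apply, ContinuousLinearMap.adjoint_inner_right]

set_option synthInstance.maxHeartbeats 1000000 in
lemma apply_eq_zero_of_inner_eq_zero {Q : H →L[ℂ] H} (hQ : 0 ≤ Q) {x : H}
    (hx : (inner ℂ x (Q x) : ℂ) = 0) : Q x = 0 := by
  set s := CFC.sqrt Q with hs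
  have hsa : IsSelfAdjoint s := IsSelfAdjoint.of_nonneg (CFC.sqrt_nonneg Q)
  have hss : star s * (1 : H →L[ℂ] H) * s = Q := by
    rw [hsa.star_eq, mul_one]; exact CFC.sqrt_mul_sqrt_self Q hQ
  have h0 : (inner ℂ (s x) ((1 : H →L[ℂ] H) (s x)) : ℂ) = 0 := by
    rw [← inner_conjAd_apply s 1 x x, hss, hx]
  rw [ContinuousLinearMap.one_apply, inner_self_eq_zero] at h0
  have : Q x = s (s x) := by rw [← CFC.sqrt_mul_sqrt_self Q hQ]; rfl
  rw [this, h0, map_zero]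

lemma inner_le_inner_of_le {P Q : H →L[ℂ] H} (hQP : Q ≤ P) (x : H) :
    (inner ℂ x (Q x) : ℂ) ≤ inner ℂ x (P x) := by
  have h := ((isPosOp_iff_nonneg (P - Q)).mpr (sub_nonneg.mpr hQP)) x
  rw [ContinuousLinearMap.sub_apply, inner_sub_right] at h
  exact sub_nonneg.mp h

lemma apply_eq_zero_of_le {P Q : H →L[ℂ] H} (hQ : 0 ≤ Q) (hQP : Q ≤ P) {x : H}
    (hx : P x = 0) : Q x = 0 := by
  refine apply_eq_zero_of_inner_eq_zero hQ (le_antisymm ?_ ?_)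
  · have := inner_le_inner_of_le hQP x
    rwa [hx, inner_zero_right] at this
  · exact ((isPosOp_iff_nonneg Q).mpr hQ) x

section withA
variable {A : Type*} [Ring A] [StarRing A] [Algebra ℂ A]

lemma conjAd_comp_comp (T S : H →L[ℂ] H) (Φ : A →ₗ[ℂ] (H →L[ℂ] H)) :
    (conjAd T).comp ((conjAd S).comp Φ) = (conjAd (S * T)).comp Φ := by
  refine LinearMap.ext fun a => ?_
  exact conjAd_conjAd S T (Φ a)

lemma conjAd_one_comp (Φ : A →ₗ[ℂ] (H →L[ℂ] H)) : (conjAd (1 : H →L[ℂ] H)).comp Φ = Φ := by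
  refine LinearMap.ext fun a => ?_
  simp

lemma IsCPMap.conjAdComp {Φ : A →ₗ[ℂ] (H →L[ℂ] H)} (hΦ : IsCPMap Φ) (T : H →L[ℂ] H) :
    IsCPMap ((conjAd T).comp Φ) := by
  intro n a h
  have := hΦ n a (fun i => T (h i))
  simpa only [LinearMap.coe_comp, Function.comp_apply, conjAd_apply, inner_conjAd_apply] using this

lemma IsCPMap.addCP {Φ Ψ : A →ₗ[ℂ] (H →L[ℂ] H)} (hΦ : IsCPMap Φ) (hΨ : IsCPMap Ψ) :
    IsCPMap (Φ + Ψ) := by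
  intro n a h
  have := add_nonneg (hΦ n a h) (hΨ n a h)
  simpa [inner_add_right, Finset.sum_add_distrib] using this

end withA

end Helpers


section Congruence

lemma isUnit_of_mul_self_isUnit {M : Type*} [Monoid M] {s : M} (h : IsUnit (s * s)) :
    IsUnit s := by
  have hc : Commute s (s * s) := by
    unfold Commute SemiconjBy
    rw [← mul_assoc]
  obtain ⟨u, hu⟩ := h
  have hc' : Commute s ↑u⁻¹ := by
    refine Commute.units_inv_right ?_
    rw [Commute, SemiconjBy, hu]
    exact hc
  refine isUnit_iff_exists.mpr ⟨s * ↑u⁻¹, ?_, ?_⟩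
  · rw [← mul_assoc, ← hu, Units.mul_inv]
  · rw [mul_assoc, ← hc'.eq, ← mul_assoc, ← hu, Units.mul_inv]

variable {H : Type*} [NormedAddCommGroup H] [InnerProductSpace ℂ H] [CompleteSpace H]

set_option synthInstance.maxHeartbeats 1000000 in
lemma exists_congruence_of_isUnit {P Q T : H →L[ℂ] H} (hPu : IsUnit P)
    (hP : 0 ≤ P) (hQ : 0 ≤ Q) (hT : IsUnit T) (hTQ : star T * P * T ≤ Q) :
    ∃ R : H →L[ℂ] H, IsUnit R ∧ star R * P * R = Q := by
  have hconj : (0 : H →L[ℂ] H) ≤ star T * P * T := star_left_conjugate_nonneg hP T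
  have hQu : IsUnit Q := CStarAlgebra.isUnit_of_le _ hTQ ⟨hconj, (hT.star.mul hPu).mul hT⟩
  have hsp : CFC.sqrt P * CFC.sqrt P = P := CFC.sqrt_mul_sqrt_self P hP
  have hsq : CFC.sqrt Q * CFC.sqrt Q = Q := CFC.sqrt_mul_sqrt_self Q hQ
  have hspu : IsUnit (CFC.sqrt P) := isUnit_of_mul_self_isUnit (hsp.symm ▸ hPu)
  have hsqu : IsUnit (CFC.sqrt Q) := isUnit_of_mul_self_isUnit (hsq.symm ▸ hQu)
  set p := CFC.sqrt P with hpdef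
  set q := CFC.sqrt Q with hqdef
  set pinv := Ring.inverse p with hpinv
  have hpinvu : IsUnit pinv := by
    rw [hpinv, ← hspu.unit_spec, Ring.inverse_unit]
    exact (hspu.unit⁻¹).isUnit
  have hsaP : IsSelfAdjoint p := .of_nonneg (CFC.sqrt_nonneg P)
  have hsaQ : IsSelfAdjoint q := .of_nonneg (CFC.sqrt_nonneg Q)
  refine ⟨pinv * q, hpinvu.mul hsqu, ?_⟩
  have hstar : star (pinv * q) = q * pinv := by
    rw [star_mul, hsaQ.star_eq, hpinv, ← Ring.inverse_star, hsaP.star_eq]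
  rw [hstar, ← hsp]
  have : q * pinv * (p * p) * (pinv * q) = q * ((pinv * p) * (p * pinv)) * q := by
    simp only [mul_assoc]
  rw [this, Ring.inverse_mul_cancel _ hspu, Ring.mul_inverse_cancel _ hspu, one_mul, mul_one]
  exact hsq

end Congruence


section FinDimCongruence

variable {H : Type*} [NormedAddCommGroup H] [InnerProductSpace ℂ H] [CompleteSpace H]
variable [FiniteDimensional ℂ H]

lemma card_eigenvalues_zero (P : H →L[ℂ] H)
    (hsym : (↑P : H →ₗ[ℂ] H).IsSymmetric) {n : ℕ} (hn : Module.finrank ℂ H = n) :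
    (Finset.univ.filter fun i => hsym.eigenvalues hn i = 0).card
      = Module.finrank ℂ (LinearMap.ker (↑P : H →ₗ[ℂ] H)) := by
  classical
  set e := hsym.eigenvectorBasis hn with he
  set μ := hsym.eigenvalues hn with hμ
  set s := Finset.univ.filter fun i => μ i = 0 with hs
  have key : LinearMap.ker (↑P : H →ₗ[ℂ] H)
      = Submodule.span ℂ (Set.range (fun i : s => e i)) := by
    apply le_antisymm
    · intro x hx
      have hx0 : (↑P : H →ₗ[ℂ] H) x = 0 := hx
      have hrepr : ∀ i, i ∉ s → e.repr x i = 0 := by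
        intro i hi
        have h1 : e.repr ((↑P : H →ₗ[ℂ] H) x) i = (μ i : ℂ) * e.repr x i :=
          hsym.eigenvectorBasis_apply_self_apply hn x i
        rw [hx0, map_zero] at h1
        have hμi : (μ i : ℂ) ≠ 0 := by
          simp only [hs, Finset.mem_filter, Finset.mem_univ, true_and] at hi
          exact_mod_cast Complex.ofReal_ne_zero.mpr hi
        have := (mul_eq_zero.mp h1.symm).resolve_left hμi
        simpa using this
      rw [← e.sum_repr x]
      refine Submodule.sum_mem _ fun i _ => ?_
      by_cases hi : i ∈ s
      · exact Submodule.smul_mem _ _ (Submodule.subset_span ⟨⟨i, hi⟩, rfl⟩)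
      · rw [hrepr i hi, zero_smul]; exact Submodule.zero_mem _
    · rw [Submodule.span_le]
      rintro _ ⟨⟨i, hi⟩, rfl⟩
      have h1 : (↑P : H →ₗ[ℂ] H) (e i) = (μ i : ℂ) • e i := hsym.apply_eigenvectorBasis hn i
      have hμi : μ i = 0 := by
        simpa only [hs, Finset.mem_filter, Finset.mem_univ, true_and] using hi
      rw [SetLike.mem_coe, LinearMap.mem_ker, h1, hμi]
      simp
  have hli : LinearIndependent ℂ (fun i : s => e i) :=
    (e.orthonormal.comp _ Subtype.val_injective).linearIndependent
  rw [key, finrank_span_eq_card hli, Fintype.card_coe]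

end FinDimCongruence


set_option maxHeartbeats 1000000 in
lemma exists_congruence_of_finDim {H : Type*} [NormedAddCommGroup H] [InnerProductSpace ℂ H]
    [CompleteSpace H] [FiniteDimensional ℂ H] {P Q T : H →L[ℂ] H}
    (hP : 0 ≤ P) (hQ : 0 ≤ Q) (hQP : Q ≤ P) (hT : IsUnit T) (hTQ : star T * P * T ≤ Q) :
    ∃ R : H →L[ℂ] H, IsUnit R ∧ star R * P * R = Q := by
  classical
  set n := Module.finrank ℂ H with hnn
  have hn : Module.finrank ℂ H = n := rfl
  have hsymP : (↑P : H →ₗ[ℂ] H).IsSymmetric :=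
    (ContinuousLinearMap.isSelfAdjoint_iff_isSymmetric).mp
      ((ContinuousLinearMap.nonneg_iff_isPositive P).mp hP).isSelfAdjoint
  have hsymQ : (↑Q : H →ₗ[ℂ] H).IsSymmetric :=
    (ContinuousLinearMap.isSelfAdjoint_iff_isSymmetric).mp
      ((ContinuousLinearMap.nonneg_iff_isPositive Q).mp hQ).isSelfAdjoint
  set e := hsymP.eigenvectorBasis hn with he
  set μ := hsymP.eigenvalues hn with hμdef
  set f := hsymQ.eigenvectorBasis hn with hf
  set ν := hsymQ.eigenvalues hn with hνdef
  have hPe : ∀ i, P (e i) = (μ i : ℂ) • e i := fun i => hsymP.apply_eigenvectorBasis hn i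
  have hQf : ∀ i, Q (f i) = (ν i : ℂ) • f i := fun i => hsymQ.apply_eigenvectorBasis hn i
  -- nonnegativity of eigenvalues
  have hμ0 : ∀ i, 0 ≤ μ i := by
    intro i
    have h1 := ((isPosOp_iff_nonneg P).mpr hP) (e i)
    rw [hPe i, inner_smul_right, inner_self_eq_norm_sq_to_K] at h1
    have hni : ‖e i‖ = 1 := e.orthonormal.1 i
    rw [hni] at h1
    simpa using (Complex.nonneg_iff.mp h1).1
  have hν0 : ∀ i, 0 ≤ ν i := by
    intro i
    have h1 := ((isPosOp_iff_nonneg Q).mpr hQ) (f i)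
    rw [hQf i, inner_smul_right, inner_self_eq_norm_sq_to_K] at h1
    have hni : ‖f i‖ = 1 := f.orthonormal.1 i
    rw [hni] at h1
    simpa using (Complex.nonneg_iff.mp h1).1
  -- T is injective
  have hTinj : Function.Injective T := by
    obtain ⟨u, rfl⟩ := hT
    intro x y hxy
    have h1 := congrArg (fun z => (↑u⁻¹ : H →L[ℂ] H) z) hxy
    simpa only [← ContinuousLinearMap.mul_apply, Units.inv_mul,
      ContinuousLinearMap.one_apply] using h1
  -- kernels have equal finrank
  have hker1 : LinearMap.ker (↑P : H →ₗ[ℂ] H) ≤ LinearMap.ker (↑Q : H →ₗ[ℂ] H) := by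
    intro x hx
    exact apply_eq_zero_of_le hQ hQP (LinearMap.mem_ker.mp hx)
  have hmapT : ∀ x ∈ LinearMap.ker (↑Q : H →ₗ[ℂ] H), (↑T : H →ₗ[ℂ] H) x ∈
      LinearMap.ker (↑P : H →ₗ[ℂ] H) := by
    intro x hx
    have hx0 : Q x = 0 := LinearMap.mem_ker.mp hx
    have h1 : (star T * P * T) x = 0 :=
      apply_eq_zero_of_le (star_left_conjugate_nonneg hP T) hTQ hx0
    have h2 : (inner ℂ (T x) (P (T x)) : ℂ) = 0 := by
      rw [← inner_conjAd_apply T P x x, h1, inner_zero_right]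
    exact LinearMap.mem_ker.mpr (apply_eq_zero_of_inner_eq_zero hP h2)
  have hkerQP : Module.finrank ℂ (LinearMap.ker (↑Q : H →ₗ[ℂ] H))
      ≤ Module.finrank ℂ (LinearMap.ker (↑P : H →ₗ[ℂ] H)) := by
    refine LinearMap.finrank_le_finrank_of_injective
      (f := (↑T : H →ₗ[ℂ] H).restrict hmapT) ?_
    intro x y hxy
    have := congrArg Subtype.val hxy
    exact Subtype.ext (hTinj this)
  have hkerPQ : Module.finrank ℂ (LinearMap.ker (↑P : H →ₗ[ℂ] H))
      ≤ Module.finrank ℂ (LinearMap.ker (↑Q : H →ₗ[ℂ] H)) :=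
    Submodule.finrank_mono hker1
  have hcard : (Finset.univ.filter fun i => ν i = 0).card
      = (Finset.univ.filter fun i => μ i = 0).card := by
    rw [card_eigenvalues_zero Q hsymQ hn, card_eigenvalues_zero P hsymP hn]
    exact le_antisymm hkerQP hkerPQ
  -- a permutation matching zero eigenvalues
  have hcard1 : Fintype.card {i : Fin n // ν i = 0} = Fintype.card {i : Fin n // μ i = 0} := by
    rw [Fintype.card_subtype, Fintype.card_subtype]; exact hcard
  have e1 : {i : Fin n // ν i = 0} ≃ {i : Fin n // μ i = 0} := Fintype.equivOfCardEq hcard1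
  have e2 : {i : Fin n // ¬ ν i = 0} ≃ {i : Fin n // ¬ μ i = 0} :=
    Fintype.equivOfCardEq (by
      rw [Fintype.card_subtype_compl, Fintype.card_subtype_compl, hcard1])
  set σ : Equiv.Perm (Fin n) := e1.subtypeCongr e2 with hσdef
  have hσ : ∀ i, ν i = 0 ↔ μ (σ i) = 0 := by
    intro i
    by_cases h : ν i = 0
    · have hh : σ i = ↑(e1 ⟨i, h⟩) := by
        simp only [hσdef, Equiv.subtypeCongr, Equiv.trans_apply, Equiv.sumCongr_apply]
        rw [Equiv.sumCompl_symm_apply_of_pos (p := fun j => ν j = 0) h]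
        simp
      rw [hh]
      exact ⟨fun _ => (e1 ⟨i, h⟩).2, fun _ => h⟩
    · have hh : σ i = ↑(e2 ⟨i, h⟩) := by
        simp only [hσdef, Equiv.subtypeCongr, Equiv.trans_apply, Equiv.sumCongr_apply]
        rw [Equiv.sumCompl_symm_apply_of_neg (p := fun j => ν j = 0) h]
        simp
      rw [hh]
      exact ⟨fun h' => absurd h' h, fun h' => absurd h' (e2 ⟨i, h⟩).2⟩
  -- the scaling coefficients
  set c : Fin n → ℝ := fun i => if ν i = 0 then 1 else Real.sqrt (ν i / μ (σ i)) with hcdef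
  have hc_pos : ∀ i, 0 < c i := by
    intro i
    rw [hcdef]
    by_cases h : ν i = 0
    · simp [h]
    · have hν' : 0 < ν i := lt_of_le_of_ne (hν0 i) (Ne.symm h)
      have hμ' : 0 < μ (σ i) := lt_of_le_of_ne (hμ0 (σ i)) (Ne.symm fun hh => h ((hσ i).mpr hh))
      simp only [h, if_false]
      exact Real.sqrt_pos.mpr (div_pos hν' hμ')
  have hc_sq : ∀ i, (c i) ^ 2 * μ (σ i) = ν i := by
    intro i
    rw [hcdef]
    by_cases h : ν i = 0
    · have : μ (σ i) = 0 := (hσ i).mp h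
      simp [h, this]
    · have hμ' : μ (σ i) ≠ 0 := fun hh => h ((hσ i).mpr hh)
      have hd : 0 ≤ ν i / μ (σ i) :=
        div_nonneg (hν0 i) (hμ0 (σ i))
      simp only [h, if_false]
      rw [Real.sq_sqrt hd, div_mul_cancel₀ _ hμ']
  -- the operators R and R'
  set R : H →L[ℂ] H := LinearMap.toContinuousLinearMap
    (Module.Basis.constr f.toBasis ℂ fun i => (c i : ℂ) • e (σ i)) with hRdef
  set R' : H →L[ℂ] H := LinearMap.toContinuousLinearMap
    (Module.Basis.constr e.toBasis ℂ fun k => ((c (σ.symm k) : ℂ))⁻¹ • f (σ.symm k)) with hR'def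
  have hRf : ∀ i, R (f i) = (c i : ℂ) • e (σ i) := by
    intro i
    rw [hRdef]
    have : f i = f.toBasis i := (f.coe_toBasis ▸ rfl)
    rw [this]
    exact Module.Basis.constr_basis f.toBasis ℂ _ i
  have hR'e : ∀ k, R' (e k) = ((c (σ.symm k) : ℂ))⁻¹ • f (σ.symm k) := by
    intro k
    rw [hR'def]
    have : e k = e.toBasis k := (e.coe_toBasis ▸ rfl)
    rw [this]
    exact Module.Basis.constr_basis e.toBasis ℂ _ k
  have hcne : ∀ i, (c i : ℂ) ≠ 0 := fun i =>
    Complex.ofReal_ne_zero.mpr (ne_of_gt (hc_pos i))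
  have hR'R : R' * R = 1 := by
    apply ContinuousLinearMap.coe_injective
    apply Module.Basis.ext f.toBasis
    intro i
    rw [f.coe_toBasis]
    show (R' * R) (f i) = (1 : H →L[ℂ] H) (f i)
    rw [ContinuousLinearMap.mul_apply, hRf i, map_smul, hR'e (σ i)]
    simp only [Equiv.symm_apply_apply, ContinuousLinearMap.one_apply]
    rw [smul_smul, mul_inv_cancel₀ (hcne i), one_smul]
  have hRR' : R * R' = 1 := by
    apply ContinuousLinearMap.coe_injective
    apply Module.Basis.ext e.toBasis
    intro k
    rw [e.coe_toBasis]
    show (R * R') (e k) = (1 : H →L[ℂ] H) (e k)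
    rw [ContinuousLinearMap.mul_apply, hR'e k, map_smul, hRf (σ.symm k)]
    simp only [Equiv.apply_symm_apply, ContinuousLinearMap.one_apply]
    rw [smul_smul, inv_mul_cancel₀ (hcne (σ.symm k)), one_smul]
  refine ⟨R, ⟨⟨R, R', hRR', hR'R⟩, rfl⟩, ?_⟩
  -- the congruence identity
  apply ContinuousLinearMap.coe_injective
  apply Module.Basis.ext f.toBasis
  intro j
  rw [f.coe_toBasis]
  show (star R * P * R) (f j) = Q (f j)
  apply ext_inner_left ℂ
  intro x
  rw [inner_conjAd_apply, hQf j, hRf j, map_smul, hPe (σ j), inner_smul_right,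
    inner_smul_right, inner_smul_right]
  have hRx : R x = ∑ i, f.repr x i • ((c i : ℂ) • e (σ i)) := by
    conv_lhs => rw [← f.sum_repr x]
    rw [map_sum]
    simp only [map_smul, hRf]
  rw [hRx, sum_inner]
  have horth : ∀ i, (inner ℂ (f.repr x i • ((c i : ℂ) • e (σ i))) (e (σ j)) : ℂ)
      = if i = j then (starRingEnd ℂ) (f.repr x j) * (c j : ℂ) else 0 := by
    intro i
    rw [inner_smul_left, inner_smul_left]
    rcases eq_or_ne i j with rfl | hij
    · rw [if_pos rfl]
      have : (inner ℂ (e (σ i)) (e (σ i)) : ℂ) = 1 := by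
        rw [inner_self_eq_norm_sq_to_K, e.orthonormal.1 (σ i)]
        simp
      rw [this, mul_one]
      simp [mul_comm, Complex.conj_ofReal]
    · rw [if_neg hij]
      have : (inner ℂ (e (σ i)) (e (σ j)) : ℂ) = 0 :=
        e.orthonormal.2 (fun hh => hij (σ.injective hh))
      rw [this]
      ring
  rw [Finset.sum_congr rfl fun i _ => horth i, Finset.sum_ite_eq' Finset.univ j
    (fun _ => (starRingEnd ℂ) (f.repr x j) * (c j : ℂ))]
  simp only [Finset.mem_univ, if_true]
  have hxfj : (inner ℂ x (f j) : ℂ) = (starRingEnd ℂ) (f.repr x j) := by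
    rw [← inner_conj_symm, f.repr_apply_apply]
  rw [hxfj]
  have hcast : ((c j : ℂ)) * ((μ (σ j) : ℂ) * ((starRingEnd ℂ) (f.repr x j) * (c j : ℂ)))
      = (ν j : ℂ) * (starRingEnd ℂ) (f.repr x j) := by
    have : ((c j : ℂ)) * ((μ (σ j) : ℂ) * (c j : ℂ)) = (ν j : ℂ) := by
      rw [← hc_sq j]
      push_cast
      ring
    calc ((c j : ℂ)) * ((μ (σ j) : ℂ) * ((starRingEnd ℂ) (f.repr x j) * (c j : ℂ)))
        = ((c j : ℂ)) * ((μ (σ j) : ℂ) * (c j : ℂ)) * (starRingEnd ℂ) (f.repr x j) := by ring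
      _ = (ν j : ℂ) * (starRingEnd ℂ) (f.repr x j) := by rw [this]
  exact hcast


section MainHelpers

variable {H : Type*} [NormedAddCommGroup H] [InnerProductSpace ℂ H] [CompleteSpace H]

lemma exists_congruence {P Q T : H →L[ℂ] H}
    (hcase : IsUnit P ∨ FiniteDimensional ℂ H)
    (hP : 0 ≤ P) (hQ : 0 ≤ Q) (hQP : Q ≤ P) (hT : IsUnit T) (hTQ : star T * P * T ≤ Q) :
    ∃ R : H →L[ℂ] H, IsUnit R ∧ star R * P * R = Q := by
  rcases hcase with h | h
  · exact exists_congruence_of_isUnit h hP hQ hT hTQ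
  · exact exists_congruence_of_finDim hP hQ hQP hT hTQ

lemma conj_mul_expand (V W P : H →L[ℂ] H) :
    star (V * W) * P * (V * W) = star W * (star V * P * V) * W := by
  rw [star_mul]; simp only [mul_assoc]

lemma unconj (u : (H →L[ℂ] H)ˣ) {P Q : H →L[ℂ] H} (h : star (↑u) * P * ↑u = Q) :
    star (↑u⁻¹ : H →L[ℂ] H) * Q * (↑u⁻¹ : H →L[ℂ] H) = P := by
  rw [← h, ← conj_mul_expand, Units.mul_inv]
  simp

variable {A : Type*} [Ring A] [StarRing A] [Algebra ℂ A]

lemma conjAd_inv_cancel (u : (H →L[ℂ] H)ˣ) (Θ : A →ₗ[ℂ] (H →L[ℂ] H)) :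
    (conjAd (↑u⁻¹ : H →L[ℂ] H)).comp ((conjAd (↑u : H →L[ℂ] H)).comp Θ) = Θ := by
  rw [conjAd_comp_comp, Units.mul_inv, conjAd_one_comp]

lemma conjAd_inv_cancel' (u : (H →L[ℂ] H)ˣ) (Θ : A →ₗ[ℂ] (H →L[ℂ] H)) :
    (conjAd (↑u : H →L[ℂ] H)).comp ((conjAd (↑u⁻¹ : H →L[ℂ] H)).comp Θ) = Θ := by
  rw [conjAd_comp_comp, Units.inv_mul, conjAd_one_comp]

end MainHelpers

/-- If `P` is invertible or `H` is finite-dimensional, then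
`Φ ∈ CP^{(P)}` is a `P`-`C*`-extreme point iff the two-term proper decomposition
condition holds. -/
theorem stmt2 {A : Type*} [NormedRing A] [StarRing A] [CStarRing A] [NormedAlgebra ℂ A] [StarModule ℂ A] [CompleteSpace A]
    {H : Type*} [NormedAddCommGroup H] [InnerProductSpace ℂ H] [CompleteSpace H]
    (P : H →L[ℂ] H) (hP : IsPosOp P) (hcase : IsUnit P ∨ FiniteDimensional ℂ H)
    (Φ : A →ₗ[ℂ] (H →L[ℂ] H)) (hΦ : Φ ∈ CPP (A := A) P) :
    IsPCExtreme P Φ ↔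
      ∀ (T₁ T₂ : H →L[ℂ] H) (Φ₁ Φ₂ : A →ₗ[ℂ] (H →L[ℂ] H)),
        IsUnit T₁ → IsUnit T₂ → Φ₁ ∈ CPP (A := A) P → Φ₂ ∈ CPP (A := A) P →
        star T₁ * P * T₁ + star T₂ * P * T₂ = P →
        Φ = (conjAd T₁).comp Φ₁ + (conjAd T₂).comp Φ₂ →
        (∃ S₁ : H →L[ℂ] H, IsUnit S₁ ∧ Φ₁ = (conjAd S₁).comp Φ) ∧
        (∃ S₂ : H →L[ℂ] H, IsUnit S₂ ∧ Φ₂ = (conjAd S₂).comp Φ) := by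
  have hP' : (0 : H →L[ℂ] H) ≤ P := (isPosOp_iff_nonneg P).mp hP
  constructor
  · rintro ⟨-, hext⟩ T₁ T₂ Φ₁ Φ₂ hT₁ hT₂ hΦ₁ hΦ₂ hsum hdec
    have h := hext 2 ![T₁, T₂] ![Φ₁, Φ₂]
      (fun j => by fin_cases j <;> simpa)
      (fun j => by fin_cases j <;> simpa)
      (by simpa [Fin.sum_univ_two] using hsum)
      (by simpa [Fin.sum_univ_two] using hdec)
    exact ⟨by simpa using h 0, by simpa using h 1⟩
  · intro h2
    refine ⟨hΦ, ?_⟩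
    intro n
    induction n with
    | zero => exact fun T Φs _ _ _ _ j => j.elim0
    | succ n ih =>
      cases n with
      | zero =>
        intro T Φs hTu hΦs hsum hdec j
        have hj : j = 0 := Fin.eq_zero j
        subst hj
        obtain ⟨u, hu⟩ := hTu 0
        refine ⟨↑u⁻¹, Units.isUnit _, ?_⟩
        have hsum1 : (∑ j : Fin 1, (conjAd (T j)).comp (Φs j))
            = (conjAd (T 0)).comp (Φs 0) := by simp
        rw [hdec, hsum1, ← hu, conjAd_inv_cancel u (Φs 0)]
      | succ m =>
        intro T Φs hTu hΦs hsum hdec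
        set jb : Fin (m + 2) := (Fin.last m).castSucc with hjbdef
        set ja : Fin (m + 2) := Fin.last (m + 1) with hjadef
        set b := T jb with hbdef
        set a := T ja with hadef
        set Qq := star b * P * b + star a * P * a with hQdef
        have hsum2 : (∑ i : Fin m, star (T i.castSucc.castSucc) * P * T i.castSucc.castSucc)
            + Qq = P := by
          rw [Fin.sum_univ_castSucc (n := m + 1), Fin.sum_univ_castSucc (n := m)] at hsum
          rw [hQdef, ← add_assoc]
          exact hsum
        have hconj : ∀ S : H →L[ℂ] H, (0 : H →L[ℂ] H) ≤ star S * P * S :=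
          fun S => star_left_conjugate_nonneg hP' S
        have hQq0 : (0 : H →L[ℂ] H) ≤ Qq := add_nonneg (hconj b) (hconj a)
        have hQqP : Qq ≤ P := by
          rw [← hsum2]
          exact le_add_of_nonneg_left (Finset.sum_nonneg fun i _ => hconj _)
        have haQ : star a * P * a ≤ Qq := le_add_of_nonneg_left (hconj b)
        obtain ⟨R, hRu, hR⟩ := exists_congruence hcase hP' hQq0 hQqP (hTu ja) haQ
        obtain ⟨Ru, hRu_spec⟩ := hRu
        set Ψ : A →ₗ[ℂ] (H →L[ℂ] H) := (conjAd (↑Ru⁻¹ : H →L[ℂ] H)).comp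
          ((conjAd b).comp (Φs jb) + (conjAd a).comp (Φs ja)) with hΨdef
        have hΨcp : IsCPMap Ψ :=
          IsCPMap.conjAdComp (IsCPMap.addCP
            (IsCPMap.conjAdComp (hΦs jb).1 b) (IsCPMap.conjAdComp (hΦs ja).1 a)) _
        have hRconj : star (↑Ru : H →L[ℂ] H) * P * ↑Ru = Qq := by rw [hRu_spec]; exact hR
        have hΨ1 : Ψ 1 = P := by
          rw [hΨdef]
          simp only [LinearMap.comp_apply, LinearMap.add_apply, conjAd_apply]
          rw [(hΦs jb).2, (hΦs ja).2, ← hQdef]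
          exact unconj Ru hRconj
        set T' : Fin (m + 1) → (H →L[ℂ] H) :=
          Fin.snoc (fun i : Fin m => T i.castSucc.castSucc) R with hT'def
        set Φs' : Fin (m + 1) → (A →ₗ[ℂ] (H →L[ℂ] H)) :=
          Fin.snoc (fun i : Fin m => Φs i.castSucc.castSucc) Ψ with hΦs'def
        have hT'u : ∀ j, IsUnit (T' j) := by
          refine Fin.lastCases ?_ ?_
          · rw [hT'def]; simp only [Fin.snoc_last]; exact ⟨Ru, hRu_spec⟩
          · intro i; rw [hT'def]; simp only [Fin.snoc_castSucc]; exact hTu _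
        have hΦs'mem : ∀ j, Φs' j ∈ CPP (A := A) P := by
          refine Fin.lastCases ?_ ?_
          · rw [hΦs'def]; simp only [Fin.snoc_last]; exact ⟨hΨcp, hΨ1⟩
          · intro i; rw [hΦs'def]; simp only [Fin.snoc_castSucc]; exact hΦs _
        have hsum' : (∑ j, star (T' j) * P * T' j) = P := by
          rw [Fin.sum_univ_castSucc]
          simp only [hT'def, Fin.snoc_castSucc, Fin.snoc_last]
          rw [hR]
          exact hsum2
        have hdec' : Φ = ∑ j, (conjAd (T' j)).comp (Φs' j) := by
          rw [Fin.sum_univ_castSucc]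
          simp only [hT'def, hΦs'def, Fin.snoc_castSucc, Fin.snoc_last]
          have hlast : (conjAd R).comp Ψ
              = (conjAd b).comp (Φs jb) + (conjAd a).comp (Φs ja) := by
            rw [hΨdef, ← hRu_spec, conjAd_inv_cancel' Ru]
          rw [hlast, hdec, Fin.sum_univ_castSucc (n := m + 1),
            Fin.sum_univ_castSucc (n := m), add_assoc]
        have key := ih T' Φs' hT'u hΦs'mem hsum' hdec'
        have hΨS : ∃ S : H →L[ℂ] H, IsUnit S ∧ Ψ = (conjAd S).comp Φ := by
          have := key (Fin.last m)
          simpa only [hΦs'def, Fin.snoc_last] using this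
        obtain ⟨S₀, hS₀u, hS₀⟩ := hΨS
        obtain ⟨Su, hSu_spec⟩ := hS₀u
        have hSP : star S₀ * P * S₀ = P := by
          have h1 : Ψ 1 = star S₀ * Φ 1 * S₀ := by
            rw [hS₀]; simp only [LinearMap.comp_apply, conjAd_apply]
          rw [hΨ1, hΦ.2] at h1
          exact h1.symm
        have hSconj : star (↑Su : H →L[ℂ] H) * P * ↑Su = P := by rw [hSu_spec]; exact hSP
        -- two-term decomposition of Φ
        set W : H →L[ℂ] H := (↑Ru⁻¹ : H →L[ℂ] H) * (↑Su⁻¹ : H →L[ℂ] H) with hWdef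
        have hWu : IsUnit W := (Ru⁻¹.isUnit).mul (Su⁻¹.isUnit)
        have hΦW : Φ = (conjAd (b * W)).comp (Φs jb) + (conjAd (a * W)).comp (Φs ja) := by
          have h1 : Φ = (conjAd (↑Su⁻¹ : H →L[ℂ] H)).comp Ψ := by
            rw [hS₀, ← hSu_spec, conjAd_inv_cancel Su]
          rw [h1, hΨdef, conjAd_comp_comp, ← hWdef]
          rw [LinearMap.comp_add]
          rw [conjAd_comp_comp, conjAd_comp_comp]
        have hcoef : star (b * W) * P * (b * W) + star (a * W) * P * (a * W) = P := by
          have e1 : star (b * W) * P * (b * W) = star W * (star b * P * b) * W :=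
            conj_mul_expand b W P
          have e2 : star (a * W) * P * (a * W) = star W * (star a * P * a) * W :=
            conj_mul_expand a W P
          rw [e1, e2, ← add_mul, ← mul_add, ← hQdef, hWdef, conj_mul_expand,
            unconj Ru hRconj, unconj Su hSconj]
        obtain ⟨hB, hA⟩ := h2 (b * W) (a * W) (Φs jb) (Φs ja)
          ((hTu jb).mul hWu) ((hTu ja).mul hWu) (hΦs jb) (hΦs ja) hcoef hΦW
        intro j
        refine Fin.lastCases ?_ (fun k => ?_) j
        · exact hA
        · refine Fin.lastCases ?_ (fun i => ?_) k
          · exact hB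
          · simpa only [hΦs'def, Fin.snoc_castSucc] using key i.castSucc

end
end

section
/- Let A be a unital C*-algebra, H a complex Hilbert space, P ∈ B(H) positive, ψ a pure state on A, and define Φ : A → B(H) by Φ(a) = ψ(a)·P. Then Φ is both a P-C*-extreme point and a linear extreme point of CP^{(P)}(A,B(H)). -/
open scoped ComplexOrder

noncomputable section

section Aux

variable {A H : Type*}
variable [NormedAddCommGroup H] [InnerProductSpace ℂ H]
variable [Ring A] [StarRing A] [Algebra ℂ A] [StarModule ℂ A]

lemma cx_mul_nonneg {z w : ℂ} (hz : 0 ≤ z) (hw : 0 ≤ w) : 0 ≤ z * w := by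
  rw [Complex.nonneg_iff] at hz hw ⊢
  constructor
  · simp only [Complex.mul_re, ← hz.2, ← hw.2, mul_zero, sub_zero]
    exact mul_nonneg hz.1 hw.1
  · simp [Complex.mul_im, ← hz.2, ← hw.2]

lemma isCPMap_sum {ι : Type*} (s : Finset ι) (F : ι → (A →ₗ[ℂ] (H →L[ℂ] H)))
    (hF : ∀ j ∈ s, IsCPMap (F j)) : IsCPMap (∑ j ∈ s, F j) := by
  intro n a h
  have key : ∀ i j : Fin n, (inner ℂ (h i) (((∑ k ∈ s, F k) (star (a i) * a j)) (h j)) : ℂ)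
      = ∑ k ∈ s, (inner ℂ (h i) ((F k (star (a i) * a j)) (h j)) : ℂ) := by
    intro i j
    rw [LinearMap.sum_apply, ContinuousLinearMap.sum_apply, inner_sum]
  simp only [key]
  rw [show (∑ i, ∑ j, ∑ k ∈ s, (inner ℂ (h i) ((F k (star (a i) * a j)) (h j)) : ℂ))
      = ∑ i, ∑ k ∈ s, ∑ j, (inner ℂ (h i) ((F k (star (a i) * a j)) (h j)) : ℂ) from
    Finset.sum_congr rfl fun i _ => Finset.sum_comm, Finset.sum_comm]
  exact Finset.sum_nonneg fun k hk => hF k hk n a h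

lemma isCPMap_smulc {Φ : A →ₗ[ℂ] (H →L[ℂ] H)} (h : IsCPMap Φ) {c : ℂ} (hc : 0 ≤ c) :
    IsCPMap (c • Φ) := by
  intro n a hh
  simp only [LinearMap.smul_apply, ContinuousLinearMap.coe_smul', Pi.smul_apply,
    inner_smul_right, ← Finset.mul_sum]
  exact cx_mul_nonneg hc (h n a hh)

variable [CompleteSpace H]

lemma isCPMap_conjAd {Φ : A →ₗ[ℂ] (H →L[ℂ] H)} (h : IsCPMap Φ) (T : H →L[ℂ] H) :
    IsCPMap ((conjAd T).comp Φ) := by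
  intro n a hh
  have key : ∀ i j : Fin n,
      (inner ℂ (hh i) ((((conjAd T).comp Φ) (star (a i) * a j)) (hh j)) : ℂ)
      = inner ℂ (T (hh i)) ((Φ (star (a i) * a j)) (T (hh j))) := by
    intro i j
    simp only [LinearMap.comp_apply, conjAd, LinearMap.coe_mk, AddHom.coe_mk,
      ContinuousLinearMap.mul_apply, ContinuousLinearMap.star_eq_adjoint,
      ContinuousLinearMap.adjoint_inner_right]
  simp only [key]
  exact h n a (fun i => T (hh i))

end Aux
section Key
set_option linter.unusedSectionVars false

variable {A H : Type*}
variable [NormedAddCommGroup H] [InnerProductSpace ℂ H]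
variable [Ring A] [StarRing A] [Algebra ℂ A] [StarModule ℂ A] [CompleteSpace H]

lemma key_lemma (P : H →L[ℂ] H) (hP : IsPosOp P)
    (ψ : A →ₗ[ℂ] ℂ) (hψ1 : ψ 1 = 1)
    (hψpure : ∀ ρ : A →ₗ[ℂ] ℂ, (∀ a : A, 0 ≤ ρ (star a * a)) →
      (∀ a : A, 0 ≤ (ψ - ρ) (star a * a)) →
      ∃ t : ℝ, 0 ≤ t ∧ t ≤ 1 ∧ ρ = (t : ℂ) • ψ)
    (Ψ : A →ₗ[ℂ] (H →L[ℂ] H)) (hΨ : IsCPMap Ψ)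
    (hD : IsCPMap (ψ.smulRight P - Ψ)) (a : A) : Ψ a = ψ a • Ψ 1 := by
  have hquad : ∀ x : H, (inner ℂ x ((Ψ a) x) : ℂ) = ψ a * (inner ℂ x ((Ψ 1) x) : ℂ) := by
    intro x
    set ρ : A →ₗ[ℂ] ℂ :=
      { toFun := fun b => (inner ℂ x ((Ψ b) x) : ℂ)
        map_add' := by intro b c; simp [inner_add_right]
        map_smul' := by intro m b; simp [inner_smul_right] } with hρdef
    have hρapp : ∀ b, ρ b = (inner ℂ x ((Ψ b) x) : ℂ) := fun b => rfl
    have hρpos : ∀ b, 0 ≤ ρ (star b * b) := by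
      intro b
      have := hΨ 1 (fun _ => b) (fun _ => x)
      simpa [hρapp] using this
    have hdom : ∀ b, 0 ≤ ψ (star b * b) * (inner ℂ x (P x) : ℂ) - ρ (star b * b) := by
      intro b
      have := hD 1 (fun _ => b) (fun _ => x)
      simpa [hρapp, LinearMap.sub_apply, LinearMap.smulRight_apply,
        ContinuousLinearMap.sub_apply, inner_sub_right, inner_smul_right, mul_comm] using this
    rw [← hρapp a, ← hρapp 1]
    by_cases hc0 : (inner ℂ x (P x) : ℂ) = 0
    · -- degenerate case
      have hz : ∀ b, ρ (star b * b) = 0 := by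
        intro b
        have h1 := hρpos b
        have h2 := hdom b
        rw [hc0, mul_zero, zero_sub] at h2
        exact le_antisymm (by simpa using neg_nonneg.mp h2) h1
      have hρ1 : ρ 1 = 0 := by simpa using hz 1
      have heq : ∀ d : ℂ, d * ρ (star a) + (starRingEnd ℂ d) * ρ a = 0 := by
        intro d
        have hprod : star (a - d • (1:A)) * (a - d • (1:A))
            = star a * a - d • star a - (starRingEnd ℂ d) • a
              + (d * (starRingEnd ℂ d)) • (1:A) := by
          simp only [star_sub, star_smul, star_one, starRingEnd_apply, sub_mul, mul_sub,
            smul_sub, smul_mul_assoc, mul_smul_comm, smul_smul, one_mul, mul_one]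
          abel
        have h0 := hz (a - d • (1:A))
        rw [hprod] at h0
        simp only [map_add, map_sub, map_smul, smul_eq_mul, hz a, hρ1, mul_zero,
          add_zero, zero_sub, starRingEnd_apply] at h0
        rw [starRingEnd_apply]
        linear_combination -h0
      have e1 := heq 1
      have e2 := heq Complex.I
      simp only [one_mul, map_one, Complex.conj_I] at e1 e2
      have hρa : ρ a = 0 := by linear_combination (e1 + Complex.I * e2) / 2 + Complex.I_sq * (ρ a - ρ (star a)) / 2
      rw [hρa, hρ1, mul_zero]
    · -- nondegenerate case
      have hcpos : 0 ≤ (inner ℂ x (P x) : ℂ) := hP x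
      have hcr' : (inner ℂ x (P x) : ℂ) = (((inner ℂ x (P x) : ℂ).re : ℝ) : ℂ) :=
        Complex.eq_re_of_ofReal_le (r := 0) (by simpa using hcpos)
      set r : ℝ := (inner ℂ x (P x) : ℂ).re with hr
      have hcr : (inner ℂ x (P x) : ℂ) = (r : ℂ) := hcr'
      have hrnn : 0 ≤ r := (Complex.nonneg_iff.mp hcpos).1
      have hrne : r ≠ 0 := by
        intro h
        exact hc0 (by rw [hcr, h, Complex.ofReal_zero])
      have hrpos : 0 < r := lt_of_le_of_ne hrnn (Ne.symm hrne)
      set ρ' : A →ₗ[ℂ] ℂ := ((r⁻¹ : ℝ) : ℂ) • ρ with hρ'def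
      have hρ'app : ∀ b, ρ' b = ((r⁻¹ : ℝ) : ℂ) * ρ b := fun b => rfl
      have hinv_nonneg : (0:ℂ) ≤ ((r⁻¹ : ℝ) : ℂ) := by
        rw [Complex.zero_le_real]
        positivity
      obtain ⟨t, _, _, ht⟩ := hψpure ρ'
        (fun b => by rw [hρ'app]; exact cx_mul_nonneg hinv_nonneg (hρpos b))
        (fun b => by
          have hd := hdom b
          rw [hcr] at hd
          have := cx_mul_nonneg hinv_nonneg hd
          rw [mul_sub] at this
          rw [LinearMap.sub_apply, hρ'app]
          calc (0:ℂ) ≤ ((r⁻¹ : ℝ) : ℂ) * (ψ (star b * b) * (r:ℂ))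
                - ((r⁻¹ : ℝ) : ℂ) * ρ (star b * b) := this
            _ = ψ (star b * b) - ((r⁻¹ : ℝ) : ℂ) * ρ (star b * b) := by
                congr 1
                rw [mul_comm (ψ (star b * b)) ((r:ℝ):ℂ), ← mul_assoc, ← Complex.ofReal_mul,
                  inv_mul_cancel₀ hrne, Complex.ofReal_one, one_mul])
      -- ρ = (r * t) • ψ
      have hρeq : ∀ b, ρ b = ((r : ℂ) * (t : ℂ)) * ψ b := by
        intro b
        have h1 : ρ' b = (t : ℂ) * ψ b := by rw [ht]; rfl
        rw [hρ'app] at h1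
        have : ρ b = (r : ℂ) * (((r⁻¹ : ℝ) : ℂ) * ρ b) := by
          rw [← mul_assoc, ← Complex.ofReal_mul]
          rw [mul_inv_cancel₀ (ne_of_gt hrpos)]
          simp
        rw [this, h1]; ring
      rw [hρeq a, hρeq 1, hψ1]; ring
  -- polarization
  have hz : ∀ x : H, (inner ℂ (((Ψ a - ψ a • Ψ 1) : H →L[ℂ] H) x) x : ℂ) = 0 := by
    intro x
    have h1 := hquad x
    rw [← inner_conj_symm]
    have : (inner ℂ x (((Ψ a - ψ a • Ψ 1) : H →L[ℂ] H) x) : ℂ) = 0 := by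
      simp only [ContinuousLinearMap.sub_apply, ContinuousLinearMap.coe_smul', Pi.smul_apply,
        inner_sub_right, inner_smul_right, h1, sub_self]
    rw [this, map_zero]
  have : ((Ψ a - ψ a • Ψ 1 : H →L[ℂ] H) : H →ₗ[ℂ] H) = 0 := by
    rw [← inner_map_self_eq_zero]
    intro x
    exact hz x
  have h0 : (Ψ a - ψ a • Ψ 1 : H →L[ℂ] H) = 0 := by
    apply ContinuousLinearMap.coe_injective
    exact this.trans ContinuousLinearMap.coe_zero.symm
  exact sub_eq_zero.mp h0

end Key
section CP
set_option linter.unusedSectionVars false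

variable {A H : Type*}
variable [NormedAddCommGroup H] [InnerProductSpace ℂ H]
variable [Ring A] [StarRing A] [Algebra ℂ A] [StarModule ℂ A] [CompleteSpace H]

set_option maxRecDepth 8000 in
set_option maxHeartbeats 1000000 in
lemma isCPMap_smulRight (P : H →L[ℂ] H) (hP : IsPosOp P) (ψ : A →ₗ[ℂ] ℂ)
    (hψpos : ∀ a : A, 0 ≤ ψ (star a * a)) : IsCPMap (ψ.smulRight P) := by
  intro n a h
  have hsummand : ∀ i j : Fin n, (inner ℂ (h i) (((ψ.smulRight P) (star (a i) * a j)) (h j)) : ℂ)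
      = ψ (star (a i) * a j) * (inner ℂ (h i) (P (h j)) : ℂ) := by
    intro i j; simp [LinearMap.smulRight_apply, inner_smul_right]
  simp only [hsummand]
  -- P is symmetric
  have hsym : (P : H →ₗ[ℂ] H).IsSymmetric := by
    rw [LinearMap.isSymmetric_iff_inner_map_self_real]
    intro v
    have h0 : 0 ≤ (inner ℂ v (P v) : ℂ) := hP v
    have him : (inner ℂ v (P v) : ℂ).im = 0 := ((Complex.nonneg_iff).mp h0).2.symm
    have : (inner ℂ ((P : H →ₗ[ℂ] H) v) v : ℂ) = starRingEnd ℂ (inner ℂ v (P v) : ℂ) := by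
      rw [← inner_conj_symm]; rfl
    rw [this, Complex.conj_conj]
    exact ((Complex.conj_eq_iff_im).mpr him).symm
  have hPsa : ∀ u v : H, (inner ℂ u (P v) : ℂ) = (inner ℂ (P u) v : ℂ) := by
    intro u v
    exact (hsym u v).symm
  -- the Gram matrix of P at the h i
  set N : Matrix (Fin n) (Fin n) ℂ := Matrix.of fun i j => (inner ℂ (h i) (P (h j)) : ℂ) with hN
  have hNapp : ∀ i j, N i j = (inner ℂ (h i) (P (h j)) : ℂ) := fun i j => rfl
  have hNps : N.PosSemidef := by
    rw [Matrix.posSemidef_iff_dotProduct_mulVec]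
    constructor
    · ext i j
      rw [Matrix.conjTranspose_apply, hNapp, hNapp]
      rw [← inner_conj_symm (h i) (P (h j))]
      rw [show (inner ℂ (P (h j)) (h i) : ℂ) = (inner ℂ (h j) (P (h i)) : ℂ) from (hPsa (h j) (h i)).symm]
      rfl
    · intro v
      have hexp : dotProduct (star v) (N.mulVec v)
          = (inner ℂ (∑ i, v i • h i) (P (∑ j, v j • h j)) : ℂ) := by
        simp only [dotProduct, Matrix.mulVec, Pi.star_apply, RCLike.star_def,
          Finset.mul_sum]
        rw [map_sum, inner_sum, Finset.sum_comm]
        refine Finset.sum_congr rfl fun j _ => ?_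
        rw [sum_inner]
        refine Finset.sum_congr rfl fun i _ => ?_
        rw [inner_smul_left, map_smul, inner_smul_right, hNapp]
        ring
      rw [hexp]
      exact hP _
  obtain ⟨B, hB⟩ : ∃ B : Matrix (Fin n) (Fin n) ℂ, N = B.conjTranspose * B := by
    open scoped MatrixOrder in exact CStarAlgebra.nonneg_iff_eq_star_mul_self.mp hNps.nonneg
  have hNij : ∀ i j : Fin n, (inner ℂ (h i) (P (h j)) : ℂ)
      = ∑ m, (starRingEnd ℂ) (B m i) * B m j := by
    intro i j
    have h1 : N i j = (B.conjTranspose * B) i j := by rw [← hB]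
    rw [hNapp] at h1
    rw [h1, Matrix.mul_apply]
    refine Finset.sum_congr rfl fun m _ => ?_
    rw [Matrix.conjTranspose_apply]
    rfl
  have hexp2 : ∀ m : Fin n, ψ (star (∑ i, B m i • a i) * (∑ j, B m j • a j))
      = ∑ i, ∑ j, ψ (star (a i) * a j) * ((starRingEnd ℂ) (B m i) * B m j) := by
    intro m
    rw [star_sum, Finset.sum_mul_sum, map_sum]
    refine Finset.sum_congr rfl fun i _ => ?_
    rw [map_sum]
    refine Finset.sum_congr rfl fun j _ => ?_
    rw [star_smul, smul_mul_assoc, mul_smul_comm, map_smul, map_smul, smul_smul,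
      smul_eq_mul, Complex.star_def]
    ring
  have hgoal : ∑ i, ∑ j, ψ (star (a i) * a j) * (inner ℂ (h i) (P (h j)) : ℂ)
      = ∑ m, ψ (star (∑ i, B m i • a i) * (∑ j, B m j • a j)) := by
    calc ∑ i, ∑ j, ψ (star (a i) * a j) * (inner ℂ (h i) (P (h j)) : ℂ)
        = ∑ i, ∑ j, ∑ m, ψ (star (a i) * a j) * ((starRingEnd ℂ) (B m i) * B m j) :=
          Finset.sum_congr rfl fun i _ => Finset.sum_congr rfl fun j _ => by
            rw [hNij, Finset.mul_sum]
      _ = ∑ i, ∑ m, ∑ j, ψ (star (a i) * a j) * ((starRingEnd ℂ) (B m i) * B m j) :=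
          Finset.sum_congr rfl fun i _ => Finset.sum_comm
      _ = ∑ m, ∑ i, ∑ j, ψ (star (a i) * a j) * ((starRingEnd ℂ) (B m i) * B m j) :=
          Finset.sum_comm
      _ = ∑ m, ψ (star (∑ i, B m i • a i) * (∑ j, B m j • a j)) :=
          Finset.sum_congr rfl fun m _ => (hexp2 m).symm
  rw [hgoal]
  exact Finset.sum_nonneg fun m _ => hψpos _
end CP
/-- Proposition `prop-PC-ext-non-empty` (i). If `ψ` is a pure state on `A` and
`Φ(a) := ψ(a) P`, then `Φ` is both a `P`-`C*`-extreme point and a linear extreme point of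
`CP^{(P)}(A, B(H))`. -/
theorem stmt4 {A : Type*} [NormedRing A] [StarRing A] [CStarRing A] [NormedAlgebra ℂ A] [StarModule ℂ A] [CompleteSpace A]
    {H : Type*} [NormedAddCommGroup H] [InnerProductSpace ℂ H] [CompleteSpace H]
    (P : H →L[ℂ] H) (hP : IsPosOp P)
    (ψ : A →ₗ[ℂ] ℂ) (hψpos : ∀ a : A, 0 ≤ ψ (star a * a)) (hψ1 : ψ 1 = 1)
    (hψpure : ∀ ρ : A →ₗ[ℂ] ℂ, (∀ a : A, 0 ≤ ρ (star a * a)) →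
      (∀ a : A, 0 ≤ (ψ - ρ) (star a * a)) →
      ∃ t : ℝ, 0 ≤ t ∧ t ≤ 1 ∧ ρ = (t : ℂ) • ψ) :
    IsPCExtreme P (ψ.smulRight P) ∧ IsLinExtreme (CPP (A := A) P) (ψ.smulRight P) := by
  have hΦCP : IsCPMap (ψ.smulRight P) := isCPMap_smulRight P hP ψ hψpos
  have hΦ1 : (ψ.smulRight P) 1 = P := by
    rw [LinearMap.smulRight_apply, hψ1, one_smul]
  have hmem : ψ.smulRight P ∈ CPP (A := A) P := ⟨hΦCP, hΦ1⟩
  constructor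
  · refine ⟨hmem, ?_⟩
    intro n T Φs hT hΦs hsum hdecomp j
    refine ⟨1, isUnit_one, ?_⟩
    have hconj1 : (conjAd (1 : H →L[ℂ] H)).comp (ψ.smulRight P) = ψ.smulRight P := by
      apply LinearMap.ext; intro b
      simp [conjAd]
    rw [hconj1]
    set Ψ : A →ₗ[ℂ] (H →L[ℂ] H) := (conjAd (T j)).comp (Φs j) with hΨdef
    have hΨCP : IsCPMap Ψ := isCPMap_conjAd (hΦs j).1 (T j)
    have hrest : ψ.smulRight P - Ψ
        = ∑ k ∈ Finset.univ.erase j, (conjAd (T k)).comp (Φs k) := by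
      rw [hdecomp, ← Finset.sum_erase_add _ _ (Finset.mem_univ j)]
      rw [hΨdef, add_sub_cancel_right]
    have hrestCP : IsCPMap (ψ.smulRight P - Ψ) := by
      rw [hrest]
      exact isCPMap_sum _ _ (fun k _ => isCPMap_conjAd (hΦs k).1 (T k))
    have hkey := key_lemma P hP ψ hψ1 hψpure Ψ hΨCP hrestCP
    have hΨ1 : Ψ 1 = star (T j) * P * (T j) := by
      rw [hΨdef, LinearMap.comp_apply, (hΦs j).2]
      rfl
    apply LinearMap.ext; intro b
    have h1 := hkey b
    rw [hΨ1] at h1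
    have h2 : star (T j) * ((Φs j) b) * (T j) = star (T j) * (ψ b • P) * (T j) := by
      have hL : Ψ b = star (T j) * ((Φs j) b) * (T j) := rfl
      rw [hL] at h1
      rw [h1, mul_smul_comm, smul_mul_assoc]
    have hstar : IsUnit (star (T j)) := isUnit_star.mpr (hT j)
    have h3 : ((Φs j) b) * (T j) = (ψ b • P) * (T j) := by
      apply hstar.mul_left_cancel
      rw [← mul_assoc, ← mul_assoc]
      exact h2
    have h4 : (Φs j) b = ψ b • P := (hT j).mul_right_cancel h3
    rw [h4, LinearMap.smulRight_apply]
  · refine ⟨hmem, ?_⟩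
    intro n t Φs ht hΦs htsum hdecomp j
    have htj : (0:ℝ) < t j := (ht j).1
    set Ψ : A →ₗ[ℂ] (H →L[ℂ] H) := ((t j : ℝ) : ℂ) • Φs j with hΨdef
    have hΨCP : IsCPMap Ψ := isCPMap_smulc (hΦs j).1 (by
      rw [Complex.zero_le_real]; exact htj.le)
    have hrest : ψ.smulRight P - Ψ
        = ∑ k ∈ Finset.univ.erase j, ((t k : ℝ) : ℂ) • Φs k := by
      rw [hdecomp, ← Finset.sum_erase_add _ _ (Finset.mem_univ j)]
      rw [hΨdef, add_sub_cancel_right]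
    have hrestCP : IsCPMap (ψ.smulRight P - Ψ) := by
      rw [hrest]
      exact isCPMap_sum _ _ (fun k _ => isCPMap_smulc (hΦs k).1 (by
        rw [Complex.zero_le_real]; exact (ht k).1.le))
    have hkey := key_lemma P hP ψ hψ1 hψpure Ψ hΨCP hrestCP
    apply LinearMap.ext; intro b
    have h1 := hkey b
    have hΨ1 : Ψ 1 = ((t j : ℝ) : ℂ) • P := by
      rw [hΨdef, LinearMap.smul_apply, (hΦs j).2]
    rw [hΨ1] at h1
    have hL : Ψ b = ((t j : ℝ) : ℂ) • ((Φs j) b) := rfl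
    rw [hL, smul_comm] at h1
    have htne : ((t j : ℝ) : ℂ) ≠ 0 := by
      simp only [ne_eq, Complex.ofReal_eq_zero]
      exact ne_of_gt htj
    have h4 : (Φs j) b = ψ b • P := smul_right_injective _ htne h1
    rw [h4, LinearMap.smulRight_apply]

end
end

section
/- Let H be a complex Hilbert space, P ∈ B(H) positive with P ≠ 0 and ker P ≠ {0}, and let H_0 be the closure of the range of P. If S ∈ B(H) is invertible and there exist scalars α, β ∈ (0,∞) with α·P ≤ S* P S ≤ β·P, then S maps H_0^⊥ into H_0^⊥ (equivalently S* maps H_0 onto H_0), and the compression of S to H_0 (i.e., the operator H_0 → H_0 given by x ↦ Q S x, where Q is the orthogonal projection onto H_0) is invertible in B(H_0). -/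
open scoped ComplexOrder

noncomputable section

section Compress

variable {A H : Type*} [NormedAddCommGroup H] [InnerProductSpace ℂ H]

/-- Compression `X ↦ Q X|_K` of an operator on `H` to an operator on the subspace `K`. -/
def compressOp (K : Submodule ℂ H) [K.HasOrthogonalProjection] (X : H →L[ℂ] H) : K →L[ℂ] K :=
  K.orthogonalProjectionOnto.comp (X.comp K.subtypeL)

variable [Ring A] [StarRing A] [Algebra ℂ A]

/-- Compression of a linear map `Φ : A → B(H)` to a linear map `A → B(K)`. -/
def compressCP (K : Submodule ℂ H) [K.HasOrthogonalProjection] (Φ : A →ₗ[ℂ] (H →L[ℂ] H)) :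
    A →ₗ[ℂ] (K →L[ℂ] K) where
  toFun a := compressOp K (Φ a)
  map_add' a b := by
    simp [compressOp, ContinuousLinearMap.add_comp, ContinuousLinearMap.comp_add]
  map_smul' c a := by
    simp [compressOp, ContinuousLinearMap.smul_comp, ContinuousLinearMap.comp_smulₛₗ]

end Compress

set_option synthInstance.maxHeartbeats 1000000
set_option maxHeartbeats 1000000
set_option linter.unusedSectionVars false
set_option linter.unusedVariables false

section Helpers

variable {H : Type*} [NormedAddCommGroup H] [InnerProductSpace ℂ H] [CompleteSpace H]

theorem myPosAux (T : H →L[ℂ] H) (h : ∀ x : H, 0 ≤ (inner ℂ x (T x) : ℂ)) : T.IsPositive := by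
  rw [ContinuousLinearMap.isPositive_iff_complex]
  intro x
  have hx := h x
  rw [Complex.le_def] at hx
  have him : (inner ℂ x (T x) : ℂ).im = 0 := by simpa using hx.2.symm
  have hsym : (inner ℂ (T x) x : ℂ) = inner ℂ x (T x) := by
    rw [← inner_conj_symm]
    exact Complex.conj_eq_iff_im.mpr him
  constructor
  · rw [hsym]
    exact (Complex.conj_eq_iff_re.mp (Complex.conj_eq_iff_im.mpr him))
  · rw [hsym]; simpa using hx.1

theorem posInnerZeroAux (P : H →L[ℂ] H) (hP : P.IsPositive) (x : H)
    (h : inner ℂ x (P x) = (0:ℂ)) : P x = 0 := by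
  have h0 : (0:H →L[ℂ] H) ≤ P := by rwa [← ContinuousLinearMap.nonneg_iff_isPositive] at hP
  have hR : CFC.sqrt P * CFC.sqrt P = P := CFC.sqrt_mul_sqrt_self P h0
  have hRsa : IsSelfAdjoint (CFC.sqrt P) := (CFC.sqrt_nonneg (a := P)).isSelfAdjoint
  have h1 : inner ℂ (CFC.sqrt P x) (CFC.sqrt P x) = (0:ℂ) := by
    nth_rewrite 1 [← hRsa.adjoint_eq]
    rw [ContinuousLinearMap.adjoint_inner_left, ← ContinuousLinearMap.mul_apply, hR]
    exact h
  have h2 : CFC.sqrt P x = 0 := by rwa [inner_self_eq_zero] at h1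
  have : P x = (CFC.sqrt P * CFC.sqrt P) x := by rw [hR]
  rw [this, ContinuousLinearMap.mul_apply, h2, map_zero]

theorem compressAux' (K : Submodule ℂ H) [CompleteSpace K] (A B : H →L[ℂ] H) (hAB : A * B = 1)
    (hA : ∀ x ∈ Kᗮ, A x ∈ Kᗮ) : compressOp K A * compressOp K B = 1 := by
  ext x
  have hv : ((K.orthogonalProjectionOnto (B ↑x) : H))
      = B ↑x - (B ↑x - K.orthogonalProjectionOnto (B ↑x)) := by abel
  have hmem : B ↑x - (K.orthogonalProjectionOnto (B ↑x) : H) ∈ Kᗮ :=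
    K.sub_starProjection_mem_orthogonal _
  have hSv : A (B ↑x) = ↑x := by
    rw [← ContinuousLinearMap.mul_apply, hAB, ContinuousLinearMap.one_apply]
  simp only [compressOp, ContinuousLinearMap.mul_apply, ContinuousLinearMap.coe_comp',
    Function.comp_apply, Submodule.coe_subtypeL', Submodule.coe_subtype,
    ContinuousLinearMap.one_apply]
  rw [hv, map_sub, map_sub, hSv]
  rw [Submodule.orthogonalProjectionOnto_apply_of_mem_orthogonal (hA _ hmem)]
  simp [Submodule.orthogonalProjectionOnto_mem_subspace_eq_self]

end Helpers

/-- Lemma `lem-P-S-decomp`. If `S` is invertible with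
`α P ≤ S* P S ≤ β P` for some `α, β > 0`, where `P ≥ 0`, `P ≠ 0`, `ker P ≠ 0`, and `K` is the
closure of the range of `P`, then `S` maps `Kᗮ` into `Kᗮ` (equivalently `S*` maps `K` onto
`K`), and the compression of `S` to `K` is invertible in `B(K)`. -/
theorem stmt7 {H : Type*} [NormedAddCommGroup H] [InnerProductSpace ℂ H] [CompleteSpace H]
    (P S : H →L[ℂ] H) (hP : IsPosOp P) (hP0 : P ≠ 0) (hker : LinearMap.ker (P : H →ₗ[ℂ] H) ≠ ⊥)
    (hS : IsUnit S)
    (K : Submodule ℂ H) [CompleteSpace K]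
    (hK : K = (LinearMap.range (P : H →ₗ[ℂ] H)).topologicalClosure)
    (α β : ℝ) (hα : 0 < α) (hβ : 0 < β)
    (h1 : IsPosOp (star S * P * S - (α : ℂ) • P))
    (h2 : IsPosOp ((β : ℂ) • P - star S * P * S)) :
    (∀ x ∈ Kᗮ, S x ∈ Kᗮ) ∧ (⇑(star S)) '' (K : Set H) = (K : Set H) ∧
    IsUnit (compressOp K S) := by
  have hpos := myPosAux P hP
  have hPsa : IsSelfAdjoint P := hpos.isSelfAdjoint
  set S' : H →L[ℂ] H := (↑hS.unit⁻¹ : H →L[ℂ] H) with hS'def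
  have hSS' : S * S' = 1 := by
    have h := hS.unit.mul_inv
    rwa [hS.unit_spec] at h
  have hS'S : S' * S = 1 := by
    have h := hS.unit.inv_mul
    rwa [hS.unit_spec] at h
  have horth : ∀ x : H, x ∈ Kᗮ ↔ P x = 0 := by
    intro x
    have hKo : Kᗮ = (LinearMap.range (P : H →ₗ[ℂ] H) : Submodule ℂ H)ᗮ := by
      rw [hK, ← Submodule.orthogonal_orthogonal_eq_closure,
        Submodule.triorthogonal_eq_orthogonal]
    rw [hKo, Submodule.mem_orthogonal]
    constructor
    · intro hx
      have h0 : (inner ℂ (P x) x : ℂ) = 0 := hx (P x) (LinearMap.mem_range_self _ x)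
      have h0' : (inner ℂ x (P x) : ℂ) = 0 := by
        rw [← inner_conj_symm, h0, map_zero]
      exact posInnerZeroAux P hpos x h0'
    · intro hx u hu
      obtain ⟨y, rfl⟩ := hu
      show (inner ℂ (P y) x : ℂ) = 0
      nth_rewrite 1 [← hPsa.adjoint_eq]
      rw [ContinuousLinearMap.adjoint_inner_left, hx, inner_zero_right]
  have hSmem : ∀ x ∈ Kᗮ, S x ∈ Kᗮ := by
    intro x hx
    rw [horth] at hx ⊢
    have hy := h2 x
    have hexp : (((β:ℂ) • P - star S * P * S)) x = (β:ℂ) • (P x) - star S (P (S x)) := by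
      simp [ContinuousLinearMap.sub_apply, ContinuousLinearMap.smul_apply,
        ContinuousLinearMap.mul_apply]
    rw [hexp, hx, smul_zero, zero_sub, inner_neg_right, ContinuousLinearMap.star_eq_adjoint,
      ContinuousLinearMap.adjoint_inner_right] at hy
    exact posInnerZeroAux P hpos (S x) (le_antisymm (neg_nonneg.mp hy) (hP (S x)))
  have hS'mem : ∀ x ∈ Kᗮ, S' x ∈ Kᗮ := by
    intro x hx
    rw [horth] at hx ⊢
    have hy := h1 (S' x)
    have hSx : S (S' x) = x := by
      rw [← ContinuousLinearMap.mul_apply, hSS', ContinuousLinearMap.one_apply]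
    have hexp : ((star S * P * S - (α:ℂ) • P)) (S' x)
        = star S (P (S (S' x))) - (α:ℂ) • (P (S' x)) := by
      simp [ContinuousLinearMap.sub_apply, ContinuousLinearMap.smul_apply,
        ContinuousLinearMap.mul_apply]
    rw [hexp, hSx, inner_sub_right, ContinuousLinearMap.star_eq_adjoint,
      ContinuousLinearMap.adjoint_inner_right, hSx, hx, inner_zero_right, zero_sub,
      inner_smul_right] at hy
    set z : ℂ := inner ℂ (S' x) (P (S' x)) with hzdef
    have hz0 : 0 ≤ z := hP (S' x)
    have hznn : z = 0 := by
      rw [Complex.le_def] at hy hz0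
      simp only [Complex.neg_re, Complex.neg_im, Complex.zero_re, Complex.zero_im] at hy hz0
      have hre : ((α:ℂ) * z).re = α * z.re := by
        simp [Complex.mul_re, Complex.ofReal_re, Complex.ofReal_im, hz0.2.symm]
      rw [hre] at hy
      have : z.re = 0 := by nlinarith [hy.1, hz0.1]
      apply Complex.ext <;> simp [this, hz0.2.symm]
    exact posInnerZeroAux P hpos (S' x) hznn
  have hstar : ∀ (T : H →L[ℂ] H), (∀ x ∈ Kᗮ, T x ∈ Kᗮ) → ∀ y ∈ K, star T y ∈ K := by
    intro T hT y hy
    rw [← K.orthogonal_orthogonal, Submodule.mem_orthogonal]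
    intro u hu
    rw [ContinuousLinearMap.star_eq_adjoint, ContinuousLinearMap.adjoint_inner_right]
    exact (Submodule.mem_orthogonal' _ _).mp (hT u hu) y hy
  refine ⟨hSmem, ?_, ?_⟩
  · apply Set.eq_of_subset_of_subset
    · rintro _ ⟨z, hz, rfl⟩
      exact hstar S hSmem z hz
    · intro y hy
      refine ⟨star S' y, hstar S' hS'mem y hy, ?_⟩
      have : star S * star S' = 1 := by rw [← star_mul, hS'S, star_one]
      rw [← ContinuousLinearMap.mul_apply, this, ContinuousLinearMap.one_apply]
  · exact isUnit_iff_exists.mpr ⟨_, compressAux' K S S' hSS' hSmem,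
      compressAux' K S' S hS'S hS'mem⟩


end
end

section
/- Let H be a finite-dimensional complex Hilbert space, P ∈ B(H) positive with P ≠ 0 and ker P ≠ {0}, and let H_0 be the range of P. If T ∈ B(H) is invertible and T* P T ≤ β·P for some scalar β ∈ (0,∞), then T maps H_0^⊥ into H_0^⊥, and the compression of T to H_0 (i.e., the operator H_0 → H_0 given by x ↦ Q T x, where Q is the orthogonal projection onto H_0) is invertible in B(H_0). -/
open scoped ComplexOrder

noncomputable section

section Aux

variable {H : Type*} [NormedAddCommGroup H] [InnerProductSpace ℂ H] [CompleteSpace H]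

lemma isPositive_of_isPosOp (P : H →L[ℂ] H) (hP : IsPosOp P) : P.IsPositive := by
  rw [ContinuousLinearMap.isPositive_iff_complex]
  intro x
  have h := hP x
  rw [Complex.le_def] at h
  simp only [Complex.zero_re, Complex.zero_im] at h
  have hxP : (inner ℂ (P x) x : ℂ) = (starRingEnd ℂ) (inner ℂ x (P x) : ℂ) :=
    (inner_conj_symm _ _).symm
  have him : (inner ℂ (P x) x : ℂ).im = 0 := by
    rw [hxP, Complex.conj_im, ← h.2, neg_zero]
  have hre : 0 ≤ (inner ℂ (P x) x : ℂ).re := by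
    rw [hxP, Complex.conj_re]; exact h.1
  constructor
  · apply Complex.ext
    · simp
    · simp [him]
  · simpa using hre

lemma selfAdjoint_inner_swap (P : H →L[ℂ] H) (hP : IsSelfAdjoint P) (u v : H) :
    (inner ℂ (P u) v : ℂ) = inner ℂ u (P v) := by
  rw [← ContinuousLinearMap.adjoint_inner_left P, hP.adjoint_eq]

lemma posOp_apply_eq_zero (P : H →L[ℂ] H) (hP : P.IsPositive) {x : H}
    (hx : (inner ℂ x (P x) : ℂ) = 0) : P x = 0 := by
  set a : ℝ := ‖P x‖ ^ 2 with ha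
  set c : ℝ := Complex.re (inner ℂ (P (P x)) (P x) : ℂ) with hc
  have hadj := selfAdjoint_inner_swap P hP.isSelfAdjoint
  have hc0 : 0 ≤ c := hP.2 (P x)
  have ha0 : 0 ≤ a := sq_nonneg _
  have key : ∀ t : ℝ, 0 ≤ 2 * t * a + t ^ 2 * c := by
    intro t
    have h0 := hP.2 (x + (t : ℂ) • P x)
    have hexp : (inner ℂ (P (x + (t : ℂ) • P x)) (x + (t : ℂ) • P x) : ℂ)
        = inner ℂ (P x) x + (t : ℂ) * inner ℂ (P x) (P x) + (t : ℂ) * inner ℂ (P (P x)) x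
          + (t : ℂ) ^ 2 * inner ℂ (P (P x)) (P x) := by
      simp only [map_add, map_smul, inner_add_left, inner_add_right, inner_smul_left,
        inner_smul_right, Complex.conj_ofReal]
      ring
    have h1 : (inner ℂ (P x) x : ℂ) = 0 := by rw [hadj, hx]
    have h2' : (inner ℂ (P (P x)) x : ℂ) = inner ℂ (P x) (P x) := hadj (P x) x
    have h3 : (inner ℂ (P x) (P x) : ℂ) = (a : ℂ) := by
      rw [inner_self_eq_norm_sq_to_K]; norm_cast
    rw [ContinuousLinearMap.reApplyInnerSelf] at h0
    rw [hexp, h1, h2', h3] at h0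
    have : Complex.re ((0 : ℂ) + (t : ℂ) * (a : ℂ) + (t : ℂ) * (a : ℂ)
        + (t : ℂ) ^ 2 * (inner ℂ (P (P x)) (P x) : ℂ)) = 2 * t * a + t ^ 2 * c := by
      simp [Complex.add_re, Complex.mul_re, Complex.ofReal_re, Complex.ofReal_im, ← hc,
        pow_two]
      ring
    calc (0 : ℝ) ≤ _ := h0
    _ = 2 * t * a + t ^ 2 * c := this
  have hfin : a = 0 := by
    have h := key (-(a / (c + 1)))
    have hc1 : (0 : ℝ) < c + 1 := by linarith
    have heq : (2 * (-(a / (c + 1))) * a + (-(a / (c + 1))) ^ 2 * c) * (c + 1) ^ 2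
        = -(a ^ 2) * (c + 2) := by
      field_simp
      ring
    have hh : 0 ≤ -(a ^ 2) * (c + 2) := heq ▸ mul_nonneg h (sq_nonneg _)
    have ha2 : a ^ 2 = 0 := by nlinarith
    exact pow_eq_zero_iff two_ne_zero |>.mp ha2
  have : ‖P x‖ = 0 := by
    have := hfin
    rw [ha] at this
    nlinarith [norm_nonneg (P x)]
  exact norm_eq_zero.mp this

lemma mem_orth_range (P : H →L[ℂ] H) (hP : P.IsPositive) (x : H) :
    x ∈ (LinearMap.range (P : H →ₗ[ℂ] H))ᗮ ↔ P x = 0 := by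
  constructor
  · intro hx
    apply posOp_apply_eq_zero P hP
    have h := hx (P x) ⟨x, rfl⟩
    rw [← inner_conj_symm, h, map_zero]
  · intro hx
    intro u hu
    obtain ⟨v, rfl⟩ := hu
    show (inner ℂ (P v) x : ℂ) = 0
    rw [selfAdjoint_inner_swap P hP.isSelfAdjoint, hx, inner_zero_right]

end Aux

/-- Corollary `cor-invertible-conjugate-positive-inequality`. In finite
dimensions: if `T` is invertible with `T* P T ≤ β P` for some `β > 0`, where `P ≥ 0`, `P ≠ 0`,
`ker P ≠ 0`, and `K` is the range of `P`, then `T` maps `Kᗮ` into `Kᗮ` and the compression of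
`T` to `K` is invertible in `B(K)`. -/
theorem stmt8 {H : Type*} [NormedAddCommGroup H] [InnerProductSpace ℂ H] [CompleteSpace H] [FiniteDimensional ℂ H]
    (P T : H →L[ℂ] H) (hP : IsPosOp P) (hP0 : P ≠ 0) (hker : LinearMap.ker (P : H →ₗ[ℂ] H) ≠ ⊥)
    (hT : IsUnit T)
    (β : ℝ) (hβ : 0 < β)
    (h2 : IsPosOp ((β : ℂ) • P - star T * P * T)) :
    (∀ x ∈ (LinearMap.range (P : H →ₗ[ℂ] H))ᗮ, T x ∈ (LinearMap.range (P : H →ₗ[ℂ] H))ᗮ) ∧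
    IsUnit (compressOp (LinearMap.range (P : H →ₗ[ℂ] H)) T) := by
  have hPpos : P.IsPositive := isPositive_of_isPosOp P hP
  have part1 : ∀ x ∈ (LinearMap.range (P : H →ₗ[ℂ] H))ᗮ, T x ∈ (LinearMap.range (P : H →ₗ[ℂ] H))ᗮ := by
    intro x hx
    have hPx : P x = 0 := (mem_orth_range P hPpos x).mp hx
    have hineq := h2 x
    have hx0 : (inner ℂ x (P x) : ℂ) = 0 := by rw [hPx, inner_zero_right]
    have hrw : (inner ℂ x (((β : ℂ) • P - star T * P * T) x) : ℂ)
        = (β : ℂ) * inner ℂ x (P x) - inner ℂ (T x) (P (T x)) := by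
      rw [ContinuousLinearMap.sub_apply, inner_sub_right, ContinuousLinearMap.smul_apply,
        inner_smul_right, ContinuousLinearMap.mul_apply, ContinuousLinearMap.mul_apply,
        ContinuousLinearMap.star_eq_adjoint, ContinuousLinearMap.adjoint_inner_right]
    rw [hrw, hx0, mul_zero, zero_sub] at hineq
    have hTx : (inner ℂ (T x) (P (T x)) : ℂ) = 0 :=
      le_antisymm (by rwa [← neg_nonneg]) (hP (T x))
    exact (mem_orth_range P hPpos (T x)).mpr (posOp_apply_eq_zero P hPpos hTx)
  refine ⟨part1, ?_⟩
  have Tinj : Function.Injective T := by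
    obtain ⟨u, hu⟩ := hT
    intro a b hab
    have h' : (↑u⁻¹ * ↑u : H →L[ℂ] H) a = (↑u⁻¹ * ↑u : H →L[ℂ] H) b := by
      simp only [ContinuousLinearMap.mul_apply, hu, hab]
    simpa [u.inv_mul] using h'
  have hrestr : ∀ x ∈ (LinearMap.range (P : H →ₗ[ℂ] H))ᗮ,
      (T : H →ₗ[ℂ] H) x ∈ (LinearMap.range (P : H →ₗ[ℂ] H))ᗮ := part1
  set S : ((LinearMap.range (P : H →ₗ[ℂ] H))ᗮ : Submodule ℂ H) →ₗ[ℂ] ((LinearMap.range (P : H →ₗ[ℂ] H))ᗮ : Submodule ℂ H) :=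
    (T : H →ₗ[ℂ] H).restrict hrestr with hS
  have Sinj : Function.Injective S := by
    intro a b hab
    exact Subtype.ext (Tinj (congrArg Subtype.val hab))
  have Ssurj : Function.Surjective S := LinearMap.injective_iff_surjective.mp Sinj
  have Cinj : Function.Injective (compressOp (LinearMap.range (P : H →ₗ[ℂ] H)) T) := by
    intro x y hxy
    have hsub : compressOp (LinearMap.range (P : H →ₗ[ℂ] H)) T (x - y) = 0 := by
      rw [map_sub, hxy, sub_self]
    set z := x - y with hz
    have hz0 : (LinearMap.range (P : H →ₗ[ℂ] H)).orthogonalProjectionOnto (T (z : H)) = 0 := by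
      simpa [compressOp] using hsub
    have hzo : T (z : H) ∈ (LinearMap.range (P : H →ₗ[ℂ] H))ᗮ := Submodule.orthogonalProjectionOnto_eq_zero_iff.mp hz0
    obtain ⟨w, hw⟩ := Ssurj ⟨T (z : H), hzo⟩
    have hwz : (w : H) = (z : H) := Tinj (congrArg Subtype.val hw)
    have hzKo : (z : H) ∈ (LinearMap.range (P : H →ₗ[ℂ] H))ᗮ := hwz ▸ w.2
    have hzzero : (z : H) = 0 := by
      have hin : (inner ℂ ((z : H)) ((z : H)) : ℂ) = 0 := hzKo (z : H) z.2
      exact inner_self_eq_zero.mp hin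
    have : z = 0 := Subtype.ext hzzero
    rw [hz] at this
    exact sub_eq_zero.mp this
  rw [ContinuousLinearMap.isUnit_iff_bijective]
  refine ⟨Cinj, ?_⟩
  have h' : Function.Injective ((compressOp (LinearMap.range (P : H →ₗ[ℂ] H)) T : (LinearMap.range (P : H →ₗ[ℂ] H)) →ₗ[ℂ] (LinearMap.range (P : H →ₗ[ℂ] H)))) := Cinj
  exact LinearMap.injective_iff_surjective.mp h'


end
end
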